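/- arXiv:math/0406337 — 11 statements merged into one kernel-verified Lean document; each statement's English description precedes it below -/
import Mathlib

section
/- For every natural number k, the identity ∑_{n=0}^{k} 1/(k-n+1/2) · ∑_{m=0}^{n} 1/(m+1/2) = 2 ∑_{n=0}^{k} 1/(n+1) · ∑_{m=0}^{n} 1/(m+1/2) holds (all sums taken in the real numbers). -/
private lemma pf_aux (a b : ℝ) (ha : 0 < a) (hb : 0 < b) :
    (1 / a) * (1 / b) = 1 / (a * (a + b)) + 1 / (b * (a + b)) := by
  have hc : 0 < a + b := by linarith
  field_simp
  ring

/-- **Theorem 1** of the paper: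
`∑_{n=0}^{k} 1/(k-n+1/2) · ∑_{m=0}^{n} 1/(m+1/2)
  = 2 ∑_{n=0}^{k} 1/(n+1) · ∑_{m=0}^{n} 1/(m+1/2)`. -/
theorem arctan_power_theorem1 (k : ℕ) :
    ∑ n ∈ Finset.range (k + 1),
        (1 / ((k : ℝ) - (n : ℝ) + 1 / 2)) *
          ∑ m ∈ Finset.range (n + 1), 1 / ((m : ℝ) + 1 / 2) =
      2 * ∑ n ∈ Finset.range (k + 1),
        (1 / ((n : ℝ) + 1)) *
          ∑ m ∈ Finset.range (n + 1), 1 / ((m : ℝ) + 1 / 2) := by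
  classical
  set S : Finset ((_ : ℕ) × ℕ) :=
    (Finset.range (k+1)).sigma (fun n => Finset.range (n+1)) with hS
  have memS : ∀ p : (_ : ℕ) × ℕ, p ∈ S ↔ p.1 ≤ k ∧ p.2 ≤ p.1 := by
    intro p
    simp [hS, Finset.mem_sigma, Nat.lt_succ_iff]
  -- LHS as a sum over the sigma set
  have hL : (∑ n ∈ Finset.range (k + 1),
        (1 / ((k : ℝ) - (n : ℝ) + 1 / 2)) *
          ∑ m ∈ Finset.range (n + 1), 1 / ((m : ℝ) + 1 / 2))
      = ∑ p ∈ S, (1 / ((k : ℝ) - (p.1 : ℝ) + 1/2)) * (1 / ((p.2 : ℝ) + 1/2)) := by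
    rw [hS, Finset.sum_sigma]
    exact Finset.sum_congr rfl fun n _ => Finset.mul_sum _ _ _
  have hR : (∑ n ∈ Finset.range (k + 1),
        (1 / ((n : ℝ) + 1)) *
          ∑ m ∈ Finset.range (n + 1), 1 / ((m : ℝ) + 1 / 2))
      = ∑ p ∈ S, (1 / ((p.1 : ℝ) + 1)) * (1 / ((p.2 : ℝ) + 1/2)) := by
    rw [hS, Finset.sum_sigma]
    exact Finset.sum_congr rfl fun n _ => Finset.mul_sum _ _ _
  rw [hL, hR]
  -- partial fractions
  have key : ∀ p ∈ S,
      (1 / ((k : ℝ) - (p.1 : ℝ) + 1/2)) * (1 / ((p.2 : ℝ) + 1/2))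
        = 1 / (((k : ℝ) - (p.1 : ℝ) + 1/2) * ((k : ℝ) - (p.1 : ℝ) + (p.2 : ℝ) + 1))
          + 1 / (((p.2 : ℝ) + 1/2) * ((k : ℝ) - (p.1 : ℝ) + (p.2 : ℝ) + 1)) := by
    intro p hp
    obtain ⟨h1, h2⟩ := (memS p).1 hp
    have hk : (p.1 : ℝ) ≤ k := by exact_mod_cast h1
    have hm : (0:ℝ) ≤ (p.2 : ℝ) := Nat.cast_nonneg _
    have d1 : (k : ℝ) - (p.1 : ℝ) + 1/2 > 0 := by linarith
    have d2 : (p.2 : ℝ) + 1/2 > 0 := by linarith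
    have := pf_aux _ _ d1 d2
    rw [this]
    ring_nf
  rw [Finset.sum_congr rfl key, Finset.sum_add_distrib]
  -- first piece equals second piece via the involution p ↦ ⟨k - p.2, k - p.1⟩
  have hAB : (∑ p ∈ S, 1 / (((k : ℝ) - (p.1 : ℝ) + 1/2) * ((k : ℝ) - (p.1 : ℝ) + (p.2 : ℝ) + 1)))
      = ∑ p ∈ S, 1 / (((p.2 : ℝ) + 1/2) * ((k : ℝ) - (p.1 : ℝ) + (p.2 : ℝ) + 1)) := by
    apply Finset.sum_nbij' (i := fun p => ⟨k - p.2, k - p.1⟩)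
      (j := fun p => ⟨k - p.2, k - p.1⟩)
    · intro p hp
      obtain ⟨h1, h2⟩ := (memS p).1 hp
      rw [memS]
      exact ⟨Nat.sub_le _ _, Nat.sub_le_sub_left h2 k⟩
    · intro p hp
      obtain ⟨h1, h2⟩ := (memS p).1 hp
      rw [memS]
      exact ⟨Nat.sub_le _ _, Nat.sub_le_sub_left h2 k⟩
    · intro p hp
      obtain ⟨h1, h2⟩ := (memS p).1 hp
      have := h2.trans h1
      ext <;> simp [Nat.sub_sub_self, h1, this]
    · intro p hp
      obtain ⟨h1, h2⟩ := (memS p).1 hp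
      have := h2.trans h1
      ext <;> simp [Nat.sub_sub_self, h1, this]
    · intro p hp
      obtain ⟨h1, h2⟩ := (memS p).1 hp
      have h2' := h2.trans h1
      have c1 : ((k - p.1 : ℕ) : ℝ) = (k : ℝ) - p.1 := by
        rw [Nat.cast_sub h1]
      have c2 : ((k - p.2 : ℕ) : ℝ) = (k : ℝ) - p.2 := by
        rw [Nat.cast_sub h2']
      simp only [c1, c2]
      ring_nf
  have hBR : (∑ p ∈ S, 1 / (((p.2 : ℝ) + 1/2) * ((k : ℝ) - (p.1 : ℝ) + (p.2 : ℝ) + 1)))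
      = ∑ p ∈ S, (1 / ((p.1 : ℝ) + 1)) * (1 / ((p.2 : ℝ) + 1/2)) := by
    apply Finset.sum_nbij' (i := fun p => ⟨k - p.1 + p.2, p.2⟩)
      (j := fun p => ⟨k - p.1 + p.2, p.2⟩)
    · intro p hp
      obtain ⟨h1, h2⟩ := (memS p).1 hp
      rw [memS]
      refine ⟨?_, ?_⟩
      · show k - p.1 + p.2 ≤ k; omega
      · show p.2 ≤ k - p.1 + p.2; omega
    · intro p hp
      obtain ⟨h1, h2⟩ := (memS p).1 hp
      rw [memS]
      refine ⟨?_, ?_⟩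
      · show k - p.1 + p.2 ≤ k; omega
      · show p.2 ≤ k - p.1 + p.2; omega
    · intro p hp
      obtain ⟨h1, h2⟩ := (memS p).1 hp
      ext
      · simp; omega
      · rfl
    · intro p hp
      obtain ⟨h1, h2⟩ := (memS p).1 hp
      ext
      · simp; omega
      · rfl
    · intro p hp
      obtain ⟨h1, h2⟩ := (memS p).1 hp
      have c1 : ((k - p.1 + p.2 : ℕ) : ℝ) = (k : ℝ) - p.1 + p.2 := by
        push_cast [Nat.cast_sub h1]; ring
      simp only [c1]
      rw [div_mul_div_comm]
      congr 1 <;> ring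
  rw [hAB, hBR, ← two_mul]
end

section
/- For every real number a and every natural number k ≥ 1, ∑_{l=1}^{k} (a + σ_l)/(k-l+1/2) = 2 ∑_{l=1}^{k} (a + σ_l)/l + a·(σ_k − 2 H_k). (Taking a = ψ(1/2), so that a + σ_l = ψ(l+1/2), σ_k = ψ(k+1/2) − ψ(1/2) and H_k = ψ(k+1) − ψ(1), this is the digamma transformation ∑_{l=1}^{k} ψ(l+1/2)/(k-l+1/2) = 2 ∑_{l=1}^{k} ψ(l+1/2)/l + ψ(1/2)[ψ(k+1/2) − ψ(1/2) + 2ψ(1) − 2ψ(k+1)].) -/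
/-- `σ l = ∑_{j=0}^{l-1} 1/(j+1/2)`. -/
noncomputable def sigmaSum (l : ℕ) : ℝ := ∑ j ∈ Finset.range l, 1 / ((j : ℝ) + 1 / 2)

/-- `H k = ∑_{j=1}^{k} 1/j`, the k-th harmonic number. -/
noncomputable def harmonicSum (k : ℕ) : ℝ := ∑ j ∈ Finset.Icc 1 k, 1 / (j : ℝ)

open Finset

private lemma triStep (h : ℕ → ℕ → ℝ) (n : ℕ) :
    ∑ j ∈ range (n+1), ∑ m ∈ range (n+1-j), h j m =
      (∑ j ∈ range n, ∑ m ∈ range (n-j), h j m) + ∑ j ∈ range (n+1), h j (n-j) := by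
  have e1 : ∀ j ∈ range (n+1), ∑ m ∈ range (n+1-j), h j m =
      ∑ m ∈ range (n-j), h j m + h j (n-j) := by
    intro j hj
    rw [mem_range] at hj
    have : n+1-j = (n-j)+1 := by omega
    rw [this, Finset.sum_range_succ]
  rw [Finset.sum_congr rfl e1, Finset.sum_add_distrib]
  congr 1
  rw [Finset.sum_range_succ]
  simp

private lemma triComm (g : ℕ → ℕ → ℝ) (n : ℕ) :
    ∑ j ∈ range n, ∑ m ∈ range (n-j), g j m = ∑ m ∈ range n, ∑ j ∈ range (n-m), g j m := by
  induction n with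
  | zero => simp
  | succ n ih =>
    rw [triStep, triStep (fun m j => g j m), ih]
    congr 1
    have := Finset.sum_range_reflect (fun j => g j (n - j)) (n+1)
    rw [← this]
    refine Finset.sum_congr rfl fun j hj => ?_
    rw [mem_range] at hj
    congr 1
    omega

private lemma triShift (g : ℕ → ℕ → ℝ) (n : ℕ) :
    ∑ j ∈ range n, ∑ m ∈ range (n-j), g j (j+m) =
      ∑ i ∈ range n, ∑ j ∈ range (i+1), g j i := by
  induction n with
  | zero => simp
  | succ n ih =>
    rw [triStep (fun j m => g j (j+m)), ih,
      Finset.sum_range_succ (fun i => ∑ j ∈ range (i+1), g j i)]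
    congr 1
    refine Finset.sum_congr rfl fun j hj => ?_
    rw [mem_range] at hj
    congr 1
    omega

private lemma IccReflect (F : ℕ → ℝ) (k : ℕ) :
    ∑ l ∈ Finset.Icc 1 k, F l = ∑ i ∈ Finset.range k, F (k - i) := by
  rw [← Finset.Ico_add_one_right_eq_Icc, Finset.sum_Ico_eq_sum_range]
  simp only [Nat.add_sub_cancel]
  rw [← Finset.sum_range_reflect (fun i => F (k - i)) k]
  refine Finset.sum_congr rfl fun i hi => ?_
  rw [mem_range] at hi
  congr 1
  omega

private lemma IccShift (F : ℕ → ℝ) (k : ℕ) :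
    ∑ l ∈ Finset.Icc 1 k, F l = ∑ i ∈ Finset.range k, F (1 + i) := by
  rw [← Finset.Ico_add_one_right_eq_Icc, Finset.sum_Ico_eq_sum_range]
  simp only [Nat.add_sub_cancel]

/-- Corollary to **Theorem 1**: for every real `a` and every `k ≥ 1`,
`∑_{l=1}^{k} (a + σ_l)/(k-l+1/2) = 2 ∑_{l=1}^{k} (a + σ_l)/l + a·(σ_k − 2 H_k)`. -/
theorem arctan_power_theorem1_corollary (a : ℝ) (k : ℕ) (hk : 1 ≤ k) :
    ∑ l ∈ Finset.Icc 1 k, (a + sigmaSum l) / ((k : ℝ) - (l : ℝ) + 1 / 2) =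
      2 * ∑ l ∈ Finset.Icc 1 k, (a + sigmaSum l) / (l : ℝ) +
        a * (sigmaSum k - 2 * harmonicSum k) := by

  -- RHS simplification
  have haH : ∑ l ∈ Finset.Icc 1 k, a / (l:ℝ) = a * harmonicSum k := by
    rw [harmonicSum, Finset.mul_sum]
    exact Finset.sum_congr rfl fun l _ => by rw [mul_one_div]
  have hsplitR : ∑ l ∈ Finset.Icc 1 k, (a + sigmaSum l) / (l:ℝ) =
      a * harmonicSum k + ∑ l ∈ Finset.Icc 1 k, sigmaSum l / (l:ℝ) := by
    simp only [add_div]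
    rw [Finset.sum_add_distrib, haH]
  -- LHS step 1: reflect
  have hL1 : ∑ l ∈ Finset.Icc 1 k, (a + sigmaSum l) / ((k : ℝ) - (l : ℝ) + 1 / 2) =
      ∑ i ∈ range k, (a + sigmaSum (k-i)) / ((i:ℝ) + 1/2) := by
    rw [IccReflect (fun l => (a + sigmaSum l) / ((k : ℝ) - (l : ℝ) + 1 / 2)) k]
    refine Finset.sum_congr rfl fun i hi => ?_
    rw [mem_range] at hi
    have h1 : ((k - i : ℕ):ℝ) = (k:ℝ) - (i:ℝ) := by
      have : i ≤ k := hi.le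
      push_cast [this]
      ring
    have h2 : (k:ℝ) - ((k:ℝ) - (i:ℝ)) + 1/2 = (i:ℝ) + 1/2 := by ring
    rw [h1, h2]
  -- LHS step 2: split off a, expand sigmaSum
  have hL2 : ∑ i ∈ range k, (a + sigmaSum (k-i)) / ((i:ℝ) + 1/2) =
      a * sigmaSum k +
        ∑ i ∈ range k, ∑ j ∈ range (k-i), (1/((j:ℝ)+1/2)) * (1/((i:ℝ)+1/2)) := by
    simp only [add_div]
    rw [Finset.sum_add_distrib]
    congr 1
    · rw [sigmaSum, Finset.mul_sum]
      exact Finset.sum_congr rfl fun i _ => by rw [mul_one_div]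
    · refine Finset.sum_congr rfl fun i _ => ?_
      rw [sigmaSum, Finset.sum_div]
      exact Finset.sum_congr rfl fun j _ => by rw [div_eq_mul_one_div]
  -- pointwise partial fractions
  have hsplit : ∀ i j : ℕ, (1/((j:ℝ)+1/2)) * (1/((i:ℝ)+1/2)) =
      (1/((j:ℝ)+(i:ℝ)+1)) * (1/((j:ℝ)+1/2)) + (1/((j:ℝ)+(i:ℝ)+1)) * (1/((i:ℝ)+1/2)) := by
    intro i j
    have h1 : ((j:ℝ)+1/2) ≠ 0 := by positivity
    have h2 : ((i:ℝ)+1/2) ≠ 0 := by positivity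
    have h3 : ((j:ℝ)+(i:ℝ)+1) ≠ 0 := by positivity
    field_simp
    ring
  have hT : ∑ i ∈ range k, ∑ j ∈ range (k-i), (1/((j:ℝ)+1/2)) * (1/((i:ℝ)+1/2)) =
      (∑ i ∈ range k, ∑ j ∈ range (k-i), (1/((j:ℝ)+(i:ℝ)+1)) * (1/((j:ℝ)+1/2))) +
      (∑ i ∈ range k, ∑ j ∈ range (k-i), (1/((j:ℝ)+(i:ℝ)+1)) * (1/((i:ℝ)+1/2))) := by
    rw [← Finset.sum_add_distrib]
    refine Finset.sum_congr rfl fun i _ => ?_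
    rw [← Finset.sum_add_distrib]
    exact Finset.sum_congr rfl fun j _ => hsplit i j
  -- Q = P
  have hQP : ∑ i ∈ range k, ∑ j ∈ range (k-i), (1/((j:ℝ)+(i:ℝ)+1)) * (1/((i:ℝ)+1/2)) =
      ∑ i ∈ range k, ∑ j ∈ range (k-i), (1/((j:ℝ)+(i:ℝ)+1)) * (1/((j:ℝ)+1/2)) := by
    rw [triComm (fun x y => (1/((y:ℝ)+(x:ℝ)+1)) * (1/((x:ℝ)+1/2))) k]
    refine Finset.sum_congr rfl fun i _ => Finset.sum_congr rfl fun j _ => ?_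
    ring_nf
  -- P = ∑ σ_l / l
  have hP : ∑ i ∈ range k, ∑ j ∈ range (k-i), (1/((j:ℝ)+(i:ℝ)+1)) * (1/((j:ℝ)+1/2)) =
      ∑ l ∈ Finset.Icc 1 k, sigmaSum l / (l:ℝ) := by
    rw [triComm (fun x y => (1/((y:ℝ)+(x:ℝ)+1)) * (1/((y:ℝ)+1/2))) k]
    have hc : ∀ j ∈ range k, ∑ i ∈ range (k-j), (1/((j:ℝ)+(i:ℝ)+1)) * (1/((j:ℝ)+1/2)) =
        ∑ i ∈ range (k-j), (fun (x s : ℕ) => (1/((s:ℝ)+1)) * (1/((x:ℝ)+1/2))) j (j+i) := by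
      intro j _
      refine Finset.sum_congr rfl fun i _ => ?_
      push_cast
      ring_nf
    rw [Finset.sum_congr rfl hc, triShift (fun (x s : ℕ) => (1/((s:ℝ)+1)) * (1/((x:ℝ)+1/2))) k,
      IccShift (fun l => sigmaSum l / (l:ℝ)) k]
    refine Finset.sum_congr rfl fun s _ => ?_
    rw [sigmaSum, Finset.sum_div]
    refine Finset.sum_congr (by congr 1; omega) fun j _ => ?_
    push_cast
    ring
  rw [hL1, hL2, hT, hQP, hP, hsplitR, harmonicSum]
  ring
end

section
/- For every natural number n ≥ 1 and every natural number k, ∑_{m=0}^{k} t_m(n-1)/(k-m+1/2) = n · ∑_{m=0}^{k} t_m(n-1)/(m+n/2), i.e. the left-hand side equals n · t_k(n). -/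
/-- The coefficients `t_k(n)`: `t_k(0) = 1` and
`t_k(n) = ∑_{m=0}^{k} t_m(n-1)/(m + n/2)` for `n ≥ 1`. -/
noncomputable def t : ℕ → ℕ → ℝ
  | _, 0 => 1
  | k, n + 1 => ∑ m ∈ Finset.range (k + 1), t m n / ((m : ℝ) + ((n : ℝ) + 1) / 2)

lemma t_succ (k n : ℕ) :
    t k (n + 1) = ∑ m ∈ Finset.range (k + 1), t m n / ((m : ℝ) + ((n : ℝ) + 1) / 2) := rfl

/-- basic telescoping -/
lemma tel (N : ℕ) :
    ∑ i ∈ Finset.range N, (1 / ((i : ℝ) + 1 / 2) - 1 / ((i : ℝ) + 3 / 2)) =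
      2 - 1 / ((N : ℝ) + 1 / 2) := by
  have h := Finset.sum_range_sub' (fun i => 1 / ((i : ℝ) + 1 / 2)) N
  have : ∀ i ∈ Finset.range N,
      (1 / ((i : ℝ) + 1 / 2) - 1 / ((i : ℝ) + 3 / 2)) =
      (1 / ((i : ℝ) + 1 / 2) - 1 / (((i : ℕ) + 1 : ℕ) + 1 / 2)) := by
    intro i _; push_cast; ring_nf
  rw [Finset.sum_congr rfl this, h]
  norm_num

/-- telescoping over an `Ico` interval, reflected -/
lemma ico_tel (k j : ℕ) (hj : j ≤ k) :
    ∑ m ∈ Finset.Ico j (k + 1),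
        (1 / ((k : ℝ) - (m : ℝ) + 1 / 2) - 1 / ((k : ℝ) - (m : ℝ) + 3 / 2)) =
      2 - 1 / ((k : ℝ) - (j : ℝ) + 3 / 2) := by
  rw [Finset.sum_Ico_eq_sum_range]
  have hN : k + 1 - j = (k - j) + 1 := by omega
  rw [hN]
  set N := k - j with hNdef
  have hrefl := Finset.sum_range_reflect
    (fun i => (1 / ((k : ℝ) - ((j : ℕ) + i : ℕ) + 1 / 2) -
      1 / ((k : ℝ) - ((j : ℕ) + i : ℕ) + 3 / 2))) (N + 1)
  rw [← hrefl]
  have hcong : ∀ i ∈ Finset.range (N + 1),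
      (1 / ((k : ℝ) - ((j + (N + 1 - 1 - i) : ℕ) : ℝ) + 1 / 2) -
        1 / ((k : ℝ) - ((j + (N + 1 - 1 - i) : ℕ) : ℝ) + 3 / 2)) =
      (1 / ((i : ℝ) + 1 / 2) - 1 / ((i : ℝ) + 3 / 2)) := by
    intro i hi
    rw [Finset.mem_range] at hi
    have h1 : (j + (N + 1 - 1 - i) : ℕ) = k - i := by omega
    rw [h1]
    have h2 : ((k - i : ℕ) : ℝ) = (k : ℝ) - (i : ℝ) := by
      rw [Nat.cast_sub (by omega)]
    rw [h2]; ring_nf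
  rw [Finset.sum_congr rfl hcong, tel]
  have : ((N : ℝ) + 1) = (k : ℝ) - (j : ℝ) + 1 := by
    rw [hNdef, Nat.cast_sub hj]
  rw [show ((N + 1 : ℕ) : ℝ) = (N : ℝ) + 1 by push_cast; ring, this]
  ring_nf

lemma partial_frac (A y z : ℝ) (hy : y ≠ 0) (hz : z ≠ 0) (hyz : y + z ≠ 0) :
    A / y * (2 - 1 / z) = 2 * (A / y) - (1 / (y + z)) * (A / y + A / z) := by
  field_simp
  ring

lemma main : ∀ n k : ℕ,
    ∑ m ∈ Finset.range (k + 1), t m n / ((k : ℝ) - (m : ℝ) + 1 / 2) =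
      ((n : ℝ) + 1) * t k (n + 1) := by
  intro n
  induction n using Nat.strong_induction_on with
  | _ n IH =>
    -- the auxiliary identity Q
    have hQ : ∀ k : ℕ,
        ∑ m ∈ Finset.range (k + 1),
            t m n * (1 / ((k : ℝ) - (m : ℝ) + 1 / 2) - 1 / ((k : ℝ) - (m : ℝ) + 3 / 2)) =
          (2 * (k : ℝ) + 2) * t (k + 1) n / ((k : ℝ) + ((n : ℝ) + 3) / 2) := by
      intro k
      match n with
      | 0 =>
        have h0 : ∀ m, t m 0 = 1 := fun m => rfl
        have := ico_tel k 0 (Nat.zero_le k)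
        simp only [Nat.cast_zero, sub_zero] at this
        calc ∑ m ∈ Finset.range (k + 1),
              t m 0 * (1 / ((k : ℝ) - (m : ℝ) + 1 / 2) - 1 / ((k : ℝ) - (m : ℝ) + 3 / 2))
            = ∑ m ∈ Finset.Ico 0 (k + 1),
              (1 / ((k : ℝ) - (m : ℝ) + 1 / 2) - 1 / ((k : ℝ) - (m : ℝ) + 3 / 2)) := by
              rw [Finset.range_eq_Ico]
              exact Finset.sum_congr rfl (fun m _ => by rw [h0]; ring)
          _ = 2 - 1 / ((k : ℝ) + 3 / 2) := this
          _ = (2 * (k : ℝ) + 2) * t (k + 1) 0 / ((k : ℝ) + ((0 : ℕ) + 3) / 2) := by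
              rw [h0]
              have hk : (k : ℝ) + 3 / 2 > 0 := by positivity
              push_cast
              field_simp
              ring
      | q + 1 =>
        have IHq := IH q (Nat.lt_succ_self q)
        have hswap :
            ∑ m ∈ Finset.range (k + 1),
                t m (q + 1) * (1 / ((k : ℝ) - (m : ℝ) + 1 / 2) - 1 / ((k : ℝ) - (m : ℝ) + 3 / 2)) =
              ∑ j ∈ Finset.range (k + 1), ∑ m ∈ Finset.Ico j (k + 1),
                (t j q / ((j : ℝ) + ((q : ℝ) + 1) / 2)) *
                  (1 / ((k : ℝ) - (m : ℝ) + 1 / 2) - 1 / ((k : ℝ) - (m : ℝ) + 3 / 2)) := by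
          rw [← Finset.sum_comm' (s := Finset.range (k + 1)) (t := fun m => Finset.range (m + 1))
            (t' := Finset.range (k + 1)) (s' := fun j => Finset.Ico j (k + 1))
            (by intro m j; simp only [Finset.mem_range, Finset.mem_Ico]; omega)]
          apply Finset.sum_congr rfl
          intro m _
          rw [t_succ, Finset.sum_mul]
        rw [hswap]
        have hinner : ∀ j ∈ Finset.range (k + 1),
            ∑ m ∈ Finset.Ico j (k + 1),
                (t j q / ((j : ℝ) + ((q : ℝ) + 1) / 2)) *
                  (1 / ((k : ℝ) - (m : ℝ) + 1 / 2) - 1 / ((k : ℝ) - (m : ℝ) + 3 / 2)) =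
              2 * (t j q / ((j : ℝ) + ((q : ℝ) + 1) / 2))
                - (1 / ((k : ℝ) + ((q : ℝ) + 4) / 2)) *
                  (t j q / ((j : ℝ) + ((q : ℝ) + 1) / 2) + t j q / ((k : ℝ) - (j : ℝ) + 3 / 2)) := by
          intro j hj
          rw [Finset.mem_range] at hj
          rw [← Finset.mul_sum, ico_tel k j (by omega)]
          have h1 : ((j : ℝ) + ((q : ℝ) + 1) / 2) > 0 := by positivity
          have h2 : ((k : ℝ) - (j : ℝ) + 3 / 2) > 0 := by
            have : (j : ℝ) ≤ (k : ℝ) := by exact_mod_cast Nat.le_of_lt_succ hj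
            linarith
          have hsum : ((k : ℝ) + ((q : ℝ) + 4) / 2)
              = ((j : ℝ) + ((q : ℝ) + 1) / 2) + ((k : ℝ) - (j : ℝ) + 3 / 2) := by ring
          rw [hsum]
          exact partial_frac _ _ _ h1.ne' h2.ne' (by rw [← hsum]; positivity)
        rw [Finset.sum_congr rfl hinner]
        rw [Finset.sum_sub_distrib, ← Finset.mul_sum, ← Finset.mul_sum]
        have hT : ∑ j ∈ Finset.range (k + 1), t j q / ((j : ℝ) + ((q : ℝ) + 1) / 2)
            = t k (q + 1) := (t_succ k q).symm
        have hS' : ∑ j ∈ Finset.range (k + 1), t j q / ((k : ℝ) - (j : ℝ) + 3 / 2)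
            = ((q : ℝ) + 1) * t (k + 1) (q + 1) - 2 * t (k + 1) q := by
          have h := IHq (k + 1)
          rw [Finset.sum_range_succ] at h
          have hlast : t (k + 1) q / (((k + 1 : ℕ) : ℝ) - ((k + 1 : ℕ) : ℝ) + 1 / 2)
              = 2 * t (k + 1) q := by push_cast; ring_nf
          rw [hlast] at h
          have hsh : ∑ m ∈ Finset.range (k + 1), t m q / (((k + 1 : ℕ) : ℝ) - (m : ℝ) + 1 / 2)
              = ∑ j ∈ Finset.range (k + 1), t j q / ((k : ℝ) - (j : ℝ) + 3 / 2) := by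
            apply Finset.sum_congr rfl
            intro m _; push_cast; ring_nf
          rw [hsh] at h
          linarith
        rw [Finset.sum_add_distrib, hT, hS']
        have hrec : t (k + 1) (q + 1)
            = t k (q + 1) + t (k + 1) q / (((k : ℝ) + 1) + ((q : ℝ) + 1) / 2) := by
          rw [t_succ, t_succ, Finset.sum_range_succ]
          push_cast; ring_nf
          rw [add_comm]; congr 1; exact Finset.sum_congr rfl (fun x _ => by ring_nf)
        rw [hrec]
        have hc : ((k : ℝ) + ((q : ℝ) + 4) / 2) ≠ 0 := by positivity
        have hd : (((k : ℝ) + 1) + ((q : ℝ) + 1) / 2) ≠ 0 := by positivity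
        have hcast : (((q + 1 : ℕ) : ℝ) + 3) / 2 = ((q : ℝ) + 4) / 2 := by push_cast; ring
        push_cast
        field_simp
        ring
    -- now induction on k
    intro k
    induction k with
    | zero =>
      rw [t_succ]
      simp only [Finset.range_one, Finset.sum_singleton, Nat.cast_zero]
      have h1 : (0:ℝ) - 0 + 1/2 = 1/2 := by norm_num
      have hn1 : ((n : ℝ) + 1) > 0 := by positivity
      field_simp
      simp only [zero_add, Finset.range_one, Finset.sum_singleton, Nat.cast_zero]
      field_simp
      ring
    | succ k ihk =>
      have hQk := hQ k
      have hrec : t (k + 1) (n + 1) = t k (n + 1) + t (k + 1) n / (((k:ℝ) + 1) + ((n : ℝ) + 1) / 2) := by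
        rw [t_succ, t_succ, Finset.sum_range_succ]
        push_cast; ring_nf
        rw [add_comm]; congr 1; exact Finset.sum_congr rfl (fun x _ => by ring_nf)
      -- split last term of the sum
      rw [Finset.sum_range_succ]
      have hshift : ∑ m ∈ Finset.range (k + 1), t m n / (((k + 1 : ℕ) : ℝ) - (m : ℝ) + 1 / 2)
          = ∑ m ∈ Finset.range (k + 1), t m n / ((k : ℝ) - (m : ℝ) + 3 / 2) := by
        apply Finset.sum_congr rfl
        intro m _; push_cast; ring_nf
      have hsub : ∑ m ∈ Finset.range (k + 1), t m n / ((k : ℝ) - (m : ℝ) + 3 / 2)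
          = ((n : ℝ) + 1) * t k (n + 1)
            - (2 * (k : ℝ) + 2) * t (k + 1) n / ((k : ℝ) + ((n : ℝ) + 3) / 2) := by
        rw [← ihk, ← hQk, ← Finset.sum_sub_distrib]
        apply Finset.sum_congr rfl
        intro m _; ring
      rw [hshift, hsub, hrec]
      have hlast : (((k + 1 : ℕ) : ℝ) - ((k + 1 : ℕ) : ℝ) + 1 / 2) = 1 / 2 := by push_cast; ring
      rw [hlast]
      have hc : (k : ℝ) + ((n : ℝ) + 3) / 2 ≠ 0 := by positivity
      have hd : ((k : ℝ) + 1) + ((n : ℝ) + 1) / 2 ≠ 0 := by positivity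
      field_simp
      ring

/-- **Theorem 2** of the paper: for `n ≥ 1` and every `k`,
`∑_{m=0}^{k} t_m(n-1)/(k-m+1/2) = n · ∑_{m=0}^{k} t_m(n-1)/(m+n/2)`. -/
theorem arctan_power_theorem2 (n : ℕ) (hn : 1 ≤ n) (k : ℕ) :
    ∑ m ∈ Finset.range (k + 1), t m (n - 1) / ((k : ℝ) - (m : ℝ) + 1 / 2) =
      (n : ℝ) * ∑ m ∈ Finset.range (k + 1), t m (n - 1) / ((m : ℝ) + (n : ℝ) / 2) := by
  obtain ⟨q, rfl⟩ : ∃ q, n = q + 1 := ⟨n - 1, by omega⟩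
  simp only [Nat.add_sub_cancel]
  have h := main q k
  have hsum : ∑ m ∈ Finset.range (k + 1), t m q / ((m : ℝ) + ((q + 1 : ℕ) : ℝ) / 2)
      = t k (q + 1) := by
    rw [t_succ]
    apply Finset.sum_congr rfl
    intro m _; push_cast; ring_nf
  rw [hsum, h]
  push_cast
  ring
end

section
/- For every natural number n ≥ 1 and every natural number k, ∑_{m=0}^{k} t_m(n-1) / ((k-m+1/2)(m+n/2)) = ((n+1)/(k+(n+1)/2)) · ∑_{m=0}^{k} t_m(n-1)/(m+n/2), i.e. the left-hand side equals ((n+1)/(k+(n+1)/2)) · t_k(n). -/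
open Finset

lemma partial_frac_s3 (x y c : ℝ) (hx : x ≠ 0) (hy : y ≠ 0) (hxy : x + y ≠ 0) :
    c / (x * y) = (1/(x+y)) * (c/x + c/y) := by
  field_simp
  ring

lemma harmonic_flip (i k : ℕ) (hik : i ≤ k) :
    ∑ m ∈ Finset.Ico i (k+1), (1:ℝ)/((k:ℝ)-(m:ℝ)+1/2)
      = ∑ j ∈ Finset.Ico i (k+1), (1:ℝ)/((j:ℝ)-(i:ℝ)+1/2) := by
  rw [Finset.sum_Ico_eq_sum_range, Finset.sum_Ico_eq_sum_range]
  have hd : k + 1 - i = (k - i) + 1 := by omega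
  rw [hd]
  have h1 : ∀ r ∈ Finset.range ((k-i)+1),
      (1:ℝ)/((k:ℝ)-((i+r : ℕ):ℝ)+1/2) = (1:ℝ)/((((k-i) - r : ℕ):ℝ)+1/2) := by
    intro r hr
    rw [Finset.mem_range] at hr
    have : ((k - i - r : ℕ):ℝ) = (k:ℝ) - (i:ℝ) - (r:ℝ) := by
      push_cast [Nat.cast_sub (by omega : r ≤ k - i), Nat.cast_sub hik]; ring
    rw [this]; push_cast; ring_nf
  have h2 : ∀ r ∈ Finset.range ((k-i)+1),
      (1:ℝ)/(((i+r : ℕ):ℝ)-(i:ℝ)+1/2) = (1:ℝ)/((r:ℝ)+1/2) := by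
    intro r _; push_cast; ring_nf
  rw [Finset.sum_congr rfl h1, Finset.sum_congr rfl h2]
  have := Finset.sum_range_reflect (fun r => (1:ℝ)/((r:ℝ)+1/2)) ((k-i)+1)
  simpa using this

lemma cor_aux (n : ℕ)
    (hkey : ∀ k, ∑ m ∈ Finset.range (k+1), t m n / ((k:ℝ)-(m:ℝ)+1/2)
      = ((n:ℝ)+1) * t k (n+1)) (k : ℕ) :
    ∑ m ∈ Finset.range (k+1),
        t m n / (((k:ℝ)-(m:ℝ)+1/2) * ((m:ℝ)+((n:ℝ)+1)/2))
      = (((n:ℝ)+2)/((k:ℝ)+((n:ℝ)+2)/2)) * t k (n+1) := by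
  have hd : ∀ m ∈ Finset.range (k+1),
      t m n / (((k:ℝ)-(m:ℝ)+1/2) * ((m:ℝ)+((n:ℝ)+1)/2))
        = (1/((k:ℝ)+((n:ℝ)+2)/2)) *
          (t m n / ((k:ℝ)-(m:ℝ)+1/2) + t m n / ((m:ℝ)+((n:ℝ)+1)/2)) := by
    intro m hm
    rw [Finset.mem_range] at hm
    have hm' : (m:ℝ) ≤ (k:ℝ) := by exact_mod_cast Nat.lt_succ_iff.mp hm
    have h1 : (k:ℝ)-(m:ℝ)+1/2 ≠ 0 := by
      have : (0:ℝ) ≤ (m:ℝ) := by positivity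
      nlinarith
    have h2 : (m:ℝ)+((n:ℝ)+1)/2 ≠ 0 := by positivity
    have hsum : (k:ℝ)+((n:ℝ)+2)/2 = ((k:ℝ)-(m:ℝ)+1/2) + ((m:ℝ)+((n:ℝ)+1)/2) := by ring
    rw [hsum]
    exact partial_frac_s3 _ _ _ h1 h2 (by rw [← hsum]; positivity)
  rw [Finset.sum_congr rfl hd, ← Finset.mul_sum, Finset.sum_add_distrib, hkey k]
  have ht : t k (n+1) = ∑ m ∈ Finset.range (k+1), t m n / ((m:ℝ)+((n:ℝ)+1)/2) := by rw [t]
  rw [← ht]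
  ring

lemma key (n : ℕ) : ∀ k, ∑ m ∈ Finset.range (k+1), t m n / ((k:ℝ)-(m:ℝ)+1/2)
    = ((n:ℝ)+1) * t k (n+1) := by
  induction n with
  | zero =>
    intro k
    have ht : t k 1 = ∑ m ∈ Finset.range (k+1), t m 0 / ((m:ℝ)+((0:ℝ)+1)/2) := by rw [t]; norm_num
    have := harmonic_flip 0 k (Nat.zero_le k)
    simp only [Nat.Ico_zero_eq_range] at this
    rw [ht]
    simp only [t, Nat.cast_zero]
    norm_num
    norm_num at this
    rw [this]
  | succ n ih =>
    intro k
    have cor := cor_aux n ih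
    have hR : t k (n+2) = ∑ j ∈ Finset.range (k+1), t j (n+1) / ((j:ℝ)+((n:ℝ)+2)/2) := by
      rw [t]
      refine Finset.sum_congr rfl fun j _ => ?_
      push_cast
      ring_nf
    push_cast
    rw [show ((n:ℝ)+1+1) * t k (n+1+1) = ((n:ℝ)+1+1) * t k (n+2) by norm_num,
        hR, Finset.mul_sum]
    have hterm : ∀ j ∈ Finset.range (k+1),
        ((n:ℝ)+1+1) * (t j (n+1) / ((j:ℝ)+((n:ℝ)+2)/2))
          = ∑ i ∈ Finset.range (j+1),
              t i n / (((j:ℝ)-(i:ℝ)+1/2) * ((i:ℝ)+((n:ℝ)+1)/2)) := by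
      intro j _
      rw [cor j]
      ring
    rw [Finset.sum_congr rfl hterm]
    have hLHS : ∑ m ∈ Finset.range (k+1), t m (n+1) / ((k:ℝ)-(m:ℝ)+1/2)
        = ∑ m ∈ Finset.range (k+1), ∑ j ∈ Finset.range (m+1),
            (t j n / ((j:ℝ)+((n:ℝ)+1)/2)) * ((1:ℝ)/((k:ℝ)-(m:ℝ)+1/2)) := by
      refine Finset.sum_congr rfl fun m _ => ?_
      rw [t, Finset.sum_div]
      refine Finset.sum_congr rfl fun j _ => ?_
      ring
    rw [hLHS]
    have hswapL : ∑ m ∈ Finset.range (k+1), ∑ j ∈ Finset.range (m+1),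
          (t j n / ((j:ℝ)+((n:ℝ)+1)/2)) * ((1:ℝ)/((k:ℝ)-(m:ℝ)+1/2))
        = ∑ j ∈ Finset.range (k+1), (t j n / ((j:ℝ)+((n:ℝ)+1)/2)) *
            ∑ m ∈ Finset.Ico j (k+1), (1:ℝ)/((k:ℝ)-(m:ℝ)+1/2) := by
      have h := Finset.sum_Ico_Ico_comm 0 (k+1)
        (fun j m => (t j n / ((j:ℝ)+((n:ℝ)+1)/2)) * ((1:ℝ)/((k:ℝ)-(m:ℝ)+1/2)))
      simp only [Nat.Ico_zero_eq_range] at h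
      rw [← h]
      refine Finset.sum_congr rfl fun j _ => ?_
      rw [Finset.mul_sum]
    have hswapR : ∑ j ∈ Finset.range (k+1), ∑ i ∈ Finset.range (j+1),
          t i n / (((j:ℝ)-(i:ℝ)+1/2) * ((i:ℝ)+((n:ℝ)+1)/2))
        = ∑ i ∈ Finset.range (k+1), (t i n / ((i:ℝ)+((n:ℝ)+1)/2)) *
            ∑ j ∈ Finset.Ico i (k+1), (1:ℝ)/((j:ℝ)-(i:ℝ)+1/2) := by
      have h := Finset.sum_Ico_Ico_comm 0 (k+1)
        (fun i j => t i n / (((j:ℝ)-(i:ℝ)+1/2) * ((i:ℝ)+((n:ℝ)+1)/2)))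
      simp only [Nat.Ico_zero_eq_range] at h
      rw [← h]
      refine Finset.sum_congr rfl fun i _ => ?_
      rw [Finset.mul_sum]
      refine Finset.sum_congr rfl fun j _ => ?_
      rw [div_mul_eq_div_div]
      ring
    rw [hswapL, hswapR]
    refine Finset.sum_congr rfl fun j hj => ?_
    rw [Finset.mem_range] at hj
    rw [harmonic_flip j k (by omega)]

/-- Corollary to **Theorem 2**: for `n ≥ 1` and every `k`,
`∑_{m=0}^{k} t_m(n-1) / ((k-m+1/2)(m+n/2))
  = ((n+1)/(k+(n+1)/2)) · ∑_{m=0}^{k} t_m(n-1)/(m+n/2)`. -/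
theorem arctan_power_theorem2_corollary (n : ℕ) (hn : 1 ≤ n) (k : ℕ) :
    ∑ m ∈ Finset.range (k + 1),
        t m (n - 1) / (((k : ℝ) - (m : ℝ) + 1 / 2) * ((m : ℝ) + (n : ℝ) / 2)) =
      (((n : ℝ) + 1) / ((k : ℝ) + ((n : ℝ) + 1) / 2)) *
        ∑ m ∈ Finset.range (k + 1), t m (n - 1) / ((m : ℝ) + (n : ℝ) / 2) := by
  obtain ⟨n', rfl⟩ : ∃ n', n = n' + 1 := ⟨n - 1, by omega⟩
  simp only [Nat.add_sub_cancel]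
  have cor := cor_aux n' (key n') k
  have ht : t k (n'+1) = ∑ m ∈ Finset.range (k+1), t m n' / ((m:ℝ)+((n':ℝ)+1)/2) := by rw [t]
  rw [ht] at cor
  push_cast
  convert cor using 2 <;> push_cast <;> ring_nf
end

section
/- For every natural number n ≥ 1 and every real number x with 0 < |x| < 1, the series ∑_{m=0}^{∞} (−x²)^m · t_m(n-1)/(m + n/2) converges, with sum (2^n / n!) · (arctan(x)/x)^n; equivalently, (arctan(x)/x)^n = (n!/2^n) · ∑_{m=0}^{∞} (−x²)^m · t_m(n-1)/(m + n/2). -/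
open Real Finset

lemma t_nonneg : ∀ n k, 0 ≤ t k n
  | 0, k => by simp [t]
  | n+1, k => by
    rw [t]
    refine Finset.sum_nonneg fun m _ => div_nonneg (t_nonneg n m) (by positivity)

lemma t_le : ∀ n k, t k n ≤ (2 * ((k : ℝ) + 1)) ^ n
  | 0, k => by simp [t]
  | n+1, k => by
    rw [t]
    have h1 : ∀ m ∈ Finset.range (k+1),
        t m n / ((m:ℝ) + ((n:ℝ)+1)/2) ≤ 2 * (2*((k:ℝ)+1))^n := by
      intro m hm
      have hm' : (m:ℝ) ≤ k := by exact_mod_cast Nat.lt_succ_iff.1 (Finset.mem_range.1 hm)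
      have hm0 : (0:ℝ) ≤ m := Nat.cast_nonneg m
      have hn0 : (0:ℝ) ≤ n := Nat.cast_nonneg n
      have hden : (0:ℝ) < (m:ℝ) + ((n:ℝ)+1)/2 := by linarith
      have htl := t_le n m
      have htn := t_nonneg n m
      have hb : (2*((m:ℝ)+1))^n ≤ (2*((k:ℝ)+1))^n := by
        apply pow_le_pow_left₀ (by linarith) (by linarith)
      rw [div_le_iff₀ hden]
      nlinarith [pow_nonneg (show (0:ℝ) ≤ 2*((k:ℝ)+1) by linarith) n]
    calc ∑ m ∈ Finset.range (k+1), t m n / ((m:ℝ) + ((n:ℝ)+1)/2)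
        ≤ ∑ _m ∈ Finset.range (k+1), 2 * (2*((k:ℝ)+1))^n := Finset.sum_le_sum h1
      _ = (k+1) * (2 * (2*((k:ℝ)+1))^n) := by
          rw [Finset.sum_const, Finset.card_range]; push_cast; ring
      _ ≤ (2*((k:ℝ)+1))^(n+1) := by
          rw [pow_succ]
          nlinarith [pow_nonneg (show (0:ℝ) ≤ 2*((k:ℝ)+1) by positivity) n]

lemma summable_aux (n : ℕ) {r : ℝ} (hr0 : 0 < r) (hr1 : r < 1) :
    Summable fun k : ℕ => (2 * ((k:ℝ)+1))^n * r ^ k := by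
  have h : Summable fun k : ℕ => ((k:ℝ))^n * r^k :=
    summable_pow_mul_geometric_of_norm_lt_one n
      (by rwa [Real.norm_eq_abs, abs_of_pos hr0])
  have h2 : Summable fun k : ℕ => (((k:ℝ)+1))^n * r^(k+1) := by
    have := (summable_nat_add_iff 1).2 h
    apply this.congr
    intro k; push_cast; ring
  refine (h2.mul_left (2^n / r)).congr fun k => ?_
  have : r ≠ 0 := ne_of_gt hr0
  rw [mul_pow, pow_succ]
  field_simp

lemma norm_term_le (n m : ℕ) (x : ℝ) :
    ‖(-x^2)^m * t m n / ((m:ℝ) + ((n:ℝ)+1)/2)‖ ≤ 2 * ((2*((m:ℝ)+1))^n * (x^2)^m) := by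
  have hm0 : (0:ℝ) ≤ m := Nat.cast_nonneg m
  have hn0 : (0:ℝ) ≤ n := Nat.cast_nonneg n
  have hden : (0:ℝ) < (m:ℝ) + ((n:ℝ)+1)/2 := by linarith
  rw [Real.norm_eq_abs, abs_div, abs_mul, abs_pow, abs_neg,
    abs_of_nonneg (sq_nonneg x), abs_of_nonneg (t_nonneg n m), abs_of_pos hden,
    div_le_iff₀ hden]
  have h1 := t_le n m
  have h2 := t_nonneg n m
  have h3 : (0:ℝ) ≤ (x^2)^m := by positivity
  have h4 : (0:ℝ) ≤ (2*((m:ℝ)+1))^n := by positivity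
  nlinarith [mul_le_mul_of_nonneg_left h1 h3,
    mul_nonneg (mul_nonneg h4 h3) (show (0:ℝ) ≤ 2*((m:ℝ) + ((n:ℝ)+1)/2) - 1 by linarith)]

lemma cauchy_step {n : ℕ} {x : ℝ} (hx1 : |x| < 1) {S : ℝ}
    (h : HasSum (fun m : ℕ => (-x^2)^m * t m n / ((m:ℝ) + ((n:ℝ)+1)/2)) S) :
    HasSum (fun k : ℕ => (-x^2)^k * t k (n+1)) (S * (1+x^2)⁻¹) := by
  have hx2 : x^2 < 1 := by nlinarith [sq_abs x, abs_nonneg x]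
  have hx2' : ‖(-x^2:ℝ)‖ < 1 := by
    rw [Real.norm_eq_abs, abs_neg, abs_of_nonneg (sq_nonneg x)]; exact hx2
  set r : ℝ := (1 + x^2)/2 with hr
  have hr0 : 0 < r := by positivity
  have hr1 : r < 1 := by rw [hr]; linarith
  have hxr : x^2 ≤ r := by rw [hr]; nlinarith [sq_nonneg x]
  have hf : Summable fun m : ℕ => ‖(-x^2)^m * t m n / ((m:ℝ) + ((n:ℝ)+1)/2)‖ := by
    apply Summable.of_nonneg_of_le (fun m => norm_nonneg _)
      (f := fun m : ℕ => 2 * ((2*((m:ℝ)+1))^n * r^m))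
    · intro m
      refine (norm_term_le n m x).trans ?_
      have : (x^2)^m ≤ r^m := pow_le_pow_left₀ (sq_nonneg x) hxr m
      have h4 : (0:ℝ) ≤ (2*((m:ℝ)+1))^n := by positivity
      nlinarith
    · exact (summable_aux n hr0 hr1).mul_left 2
  have hg : Summable fun m : ℕ => ‖(-x^2:ℝ)^m‖ := by
    simpa using summable_geometric_of_lt_one (abs_nonneg _)
      (by rwa [Real.norm_eq_abs] at hx2') |>.abs
  have H := hasSum_sum_range_mul_of_summable_norm hf hg
  rw [h.tsum_eq, (hasSum_geometric_of_norm_lt_one hx2').tsum_eq] at H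
  have heq : (1 - -x^2)⁻¹ = (1+x^2)⁻¹ := by norm_num
  rw [heq] at H
  refine H.congr_fun fun k => ?_
  rw [t, Finset.mul_sum]
  refine Finset.sum_congr rfl fun m hm => ?_
  have hmk : m ≤ k := Nat.lt_succ_iff.1 (Finset.mem_range.1 hm)
  rw [div_mul_eq_mul_div, mul_comm ((-x^2)^m), mul_assoc, ← pow_add,
    Nat.add_sub_cancel' hmk]
  ring

lemma key_s5 : ∀ n : ℕ, ∀ x : ℝ, x ≠ 0 → |x| < 1 →
    HasSum (fun m : ℕ => (-x^2)^m * t m n / ((m:ℝ) + ((n:ℝ)+1)/2))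
      ((2^(n+1) / (Nat.factorial (n+1) : ℝ)) * (Real.arctan x / x)^(n+1)) := by
  intro n
  induction n with
  | zero =>
    intro x hx0 hx1
    have h := (Real.hasSum_arctan (x := x) (by rwa [Real.norm_eq_abs])).mul_left (2/x)
    have hval : (2/x) * Real.arctan x
        = (2^(0+1) / (Nat.factorial (0+1) : ℝ)) * (Real.arctan x / x)^(0+1) := by
      simp [Nat.factorial]
      ring
    rw [hval] at h
    refine h.congr_fun fun m => ?_
    have hd : ((2*m+1:ℕ):ℝ) = 2*(m:ℝ)+1 := by push_cast; ring
    have hd0 : (2*(m:ℝ)+1) ≠ 0 := by positivity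
    simp only [t, Nat.cast_zero]
    have hxm : x ^ (2*m+1) = (x^2)^m * x := by rw [pow_add, pow_mul, pow_one]
    rw [hxm, hd, neg_pow]
    field_simp
    ring
  | succ n ih =>
    intro x hx0 hx1
    set r : ℝ := (1 + |x|)/2 with hrdef
    have hax : 0 ≤ |x| := abs_nonneg x
    have hr0 : 0 < r := by rw [hrdef]; linarith
    have hxr : |x| < r := by rw [hrdef]; linarith
    have hr1 : r < 1 := by rw [hrdef]; linarith
    set g : ℕ → ℝ → ℝ :=
      fun k y => 2 * (-1)^k * t k (n+1) * y^(2*k+n+2) / ((2*k+n+2 : ℕ) : ℝ) with hgdef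
    set g' : ℕ → ℝ → ℝ := fun k y => 2 * (-1)^k * t k (n+1) * y^(2*k+n+1) with hg'def
    set u : ℕ → ℝ := fun k => 2 * (2*((k:ℝ)+1))^(n+1) * r^(2*k+n+1) with hudef
    have hu : Summable u := by
      have hrr0 : (0:ℝ) < r^2 := by positivity
      have hrr1 : r^2 < 1 := by nlinarith
      have h := (summable_aux (n+1) hrr0 hrr1).mul_left (2 * r^(n+1))
      refine h.congr fun k => ?_
      simp only [hudef]
      rw [show r^(2*k+n+1) = (r^2)^k * r^(n+1) from by
        rw [show 2*k+n+1 = 2*k + (n+1) from rfl, pow_add, pow_mul]]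
      ring
    have hgderiv : ∀ k y, y ∈ Metric.ball (0:ℝ) r → HasDerivAt (g k) (g' k y) y := by
      intro k y _
      have h1 := hasDerivAt_pow (2*k+n+2) y
      have h2 := (h1.const_mul (2 * (-1:ℝ)^k * t k (n+1))).div_const ((2*k+n+2 : ℕ) : ℝ)
      convert h2 using 1
      · rfl
      · rfl
      have hne : ((2*k+n+2 : ℕ) : ℝ) ≠ 0 := by positivity
      simp only [hg'def]
      rw [show 2*k+n+2-1 = 2*k+n+1 from rfl]
      field_simp
    have hgbound : ∀ k y, y ∈ Metric.ball (0:ℝ) r → ‖g' k y‖ ≤ u k := by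
      intro k y hy
      have hyr : |y| ≤ r := by
        have := Metric.mem_ball.1 hy
        rw [Real.dist_eq, sub_zero] at this
        exact this.le
      simp only [hg'def, hudef]
      rw [Real.norm_eq_abs, abs_mul, abs_mul, abs_mul, abs_pow, abs_pow,
        abs_neg, abs_one, one_pow, abs_of_nonneg (t_nonneg (n+1) k)]
      have h1 : |y|^(2*k+n+1) ≤ r^(2*k+n+1) := pow_le_pow_left₀ (abs_nonneg y) hyr _
      have h2 := t_le (n+1) k
      have h3 := t_nonneg (n+1) k
      have h4 : (0:ℝ) ≤ (2*((k:ℝ)+1))^(n+1) := by positivity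
      have h5 : (0:ℝ) ≤ |y|^(2*k+n+1) := by positivity
      have h6 : (0:ℝ) ≤ r^(2*k+n+1) := by positivity
      have := mul_le_mul h2 h1 h5 h4
      simp only [abs_two]
      nlinarith
    have hg0 : Summable (fun k => g k 0) := by
      refine summable_zero.congr fun k => ?_
      simp only [hgdef]
      rw [zero_pow (show 2*k+n+2 ≠ 0 by omega)]
      simp
    have hball : x ∈ Metric.ball (0:ℝ) r := by
      rw [Metric.mem_ball, Real.dist_eq, sub_zero]; exact hxr
    have h0ball : (0:ℝ) ∈ Metric.ball (0:ℝ) r := Metric.mem_ball_self hr0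
    have hFderiv : ∀ y ∈ Metric.ball (0:ℝ) r,
        HasDerivAt (fun z => ∑' k, g k z) (∑' k, g' k y) y :=
      fun y hy => hasDerivAt_tsum_of_isPreconnected hu Metric.isOpen_ball
        (convex_ball (0:ℝ) r).isPreconnected hgderiv hgbound h0ball hg0 hy
    set D : ℝ → ℝ :=
      fun y => 2^(n+2)/((Nat.factorial (n+1)):ℝ) * Real.arctan y^(n+1) / (1+y^2) with hDdef
    have hDsum : ∀ y ∈ Metric.ball (0:ℝ) r, (∑' k, g' k y) = D y := by
      intro y hy
      have hy1 : |y| < 1 := by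
        have := Metric.mem_ball.1 hy
        rw [Real.dist_eq, sub_zero] at this
        linarith
      rcases eq_or_ne y 0 with rfl | hy0
      · simp only [hg'def, hDdef]
        have hz : ∀ k : ℕ, 2 * (-1:ℝ)^k * t k (n+1) * (0:ℝ)^(2*k+n+1) = 0 := fun k => by
          rw [zero_pow (show 2*k+n+1 ≠ 0 by omega)]; ring
        rw [tsum_congr hz, tsum_zero]
        simp [Real.arctan_zero, zero_pow (show n+1 ≠ 0 by omega)]
      · have hA := cauchy_step hy1 (ih y hy0 hy1)
        have hmul := hA.mul_left (2*y^(n+1))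
        have hfun : ∀ k, (2*y^(n+1)) * ((-y^2)^k * t k (n+1)) = g' k y := by
          intro k
          simp only [hg'def]
          rw [neg_pow,
            show y^(2*k+n+1) = (y^2)^k * y^(n+1) from by
              rw [show 2*k+n+1 = 2*k + (n+1) from rfl, pow_add, pow_mul]]
          ring
        have hS := (hmul.congr_fun (fun k => (hfun k).symm)).tsum_eq
        rw [hS]
        simp only [hDdef]
        have h1y : (1:ℝ)+y^2 ≠ 0 := by positivity
        have hyn : y^(n+1) ≠ 0 := pow_ne_zero _ hy0
        rw [div_pow]
        field_simp
        ring
    set G : ℝ → ℝ := fun y => 2^(n+2)/((Nat.factorial (n+2)):ℝ) * Real.arctan y^(n+2) with hGdef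
    have hGderiv : ∀ y, HasDerivAt G (D y) y := by
      intro y
      have h1 := ((Real.hasDerivAt_arctan y).pow (n+2)).const_mul
        (2^(n+2)/((Nat.factorial (n+2)):ℝ))
      convert h1 using 1
      · rfl
      · rfl
      · rfl
      simp only [hDdef]
      have hfac : ((Nat.factorial (n+2)):ℝ) = ((n:ℝ)+2) * ((Nat.factorial (n+1)):ℝ) := by
        rw [show n+2 = (n+1)+1 from rfl, Nat.factorial_succ]
        push_cast; ring
      have h1y : (1:ℝ)+y^2 ≠ 0 := by positivity
      have hf1 : ((Nat.factorial (n+1)):ℝ) ≠ 0 := by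
        exact_mod_cast Nat.factorial_ne_zero (n+1)
      rw [show n+2-1 = n+1 from rfl, hfac]
      push_cast
      field_simp
    have hg00 : (∑' k, g k 0) = 0 := by
      simp only [hgdef]
      have hz : ∀ k : ℕ, 2 * (-1:ℝ)^k * t k (n+1) * (0:ℝ)^(2*k+n+2) / ((2*k+n+2:ℕ):ℝ) = 0 :=
        fun k => by rw [zero_pow (show 2*k+n+2 ≠ 0 by omega)]; ring
      rw [tsum_congr hz, tsum_zero]
    have hG0 : G 0 = 0 := by
      simp only [hGdef]
      simp [zero_pow (show n+2 ≠ 0 by omega)]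
    have hconst : (∑' k, g k x) = G x := by
      have key0 : (fun z => (∑' k, g k z) - G z) x = (fun z => (∑' k, g k z) - G z) 0 := by
        refine Convex.is_const_of_fderivWithin_eq_zero (𝕜 := ℝ)
          (f := fun z => (∑' k, g k z) - G z) (convex_ball (0:ℝ) r) ?_ ?_ hball h0ball
        · intro y hy
          exact ((hFderiv y hy).sub (hGderiv y)).differentiableAt.differentiableWithinAt
        · intro y hy
          rw [fderivWithin_of_isOpen Metric.isOpen_ball hy]
          have hD : HasDerivAt (fun z => (∑' k, g k z) - G z) 0 y := by
            have := (hFderiv y hy).sub (hGderiv y)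
            rwa [hDsum y hy, sub_self] at this
          rw [hD.hasFDerivAt.fderiv]
          ext z
          simp
      simp only at key0
      rw [hg00, hG0] at key0
      linarith [key0]
    have hsummable : Summable (fun k => g k x) :=
      summable_of_summable_hasDerivAt_of_isPreconnected hu Metric.isOpen_ball
        (convex_ball (0:ℝ) r).isPreconnected hgderiv hgbound h0ball hg0 hball
    have hHasSum : HasSum (fun k => g k x) (G x) := hconst ▸ hsummable.hasSum
    have hfinal := hHasSum.mul_left ((x^(n+2))⁻¹)
    have hxn : x^(n+2) ≠ 0 := pow_ne_zero _ hx0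
    have hval : (x^(n+2))⁻¹ * G x
        = 2^(n+1+1)/((Nat.factorial (n+1+1)):ℝ) * (Real.arctan x / x)^(n+1+1) := by
      simp only [hGdef]
      rw [div_pow]
      field_simp
    rw [hval] at hfinal
    refine hfinal.congr_fun fun m => ?_
    simp only [hgdef]
    rw [show x^(2*m+n+2) = (x^2)^m * x^(n+2) from by
        rw [show 2*m+n+2 = 2*m + (n+2) from rfl, pow_add, pow_mul],
      neg_pow]
    have hd0 : ((2*m+n+2 : ℕ):ℝ) ≠ 0 := by positivity
    have hden : (m:ℝ) + (((n:ℝ)+1)+1)/2 ≠ 0 := by positivity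
    push_cast at hd0 ⊢
    field_simp
    ring

/-- **Theorem 3** of the paper: for `n ≥ 1` and `0 < |x| < 1`, the series
`∑_{m=0}^{∞} (−x²)^m · t_m(n-1)/(m + n/2)` converges with sum
`(2^n / n!) · (arctan(x)/x)^n`; equivalently
`(arctan(x)/x)^n = (n!/2^n) · ∑_{m=0}^{∞} (−x²)^m · t_m(n-1)/(m + n/2)`. -/
theorem arctan_power_theorem3 (n : ℕ) (hn : 1 ≤ n) (x : ℝ)
    (hx0 : 0 < |x|) (hx1 : |x| < 1) :
    HasSum (fun m : ℕ => (-x ^ 2) ^ m * t m (n - 1) / ((m : ℝ) + (n : ℝ) / 2))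
      ((2 ^ n / (Nat.factorial n : ℝ)) * (Real.arctan x / x) ^ n) := by
  obtain ⟨k, rfl⟩ : ∃ k, n = k + 1 := ⟨n - 1, (Nat.succ_pred_eq_of_pos hn).symm⟩
  have hx0' : x ≠ 0 := by
    intro h; rw [h, abs_zero] at hx0; exact lt_irrefl 0 hx0
  have h := key_s5 k x hx0' hx1
  simp only [Nat.add_sub_cancel]
  refine h.congr_fun fun m => ?_
  push_cast
  ring_nf
end

section
/- For every natural number n ≥ 1, t_3(n-1) = 2^{n+3} · (3 + n/2) · (35n² + 273n + 502) / (63 · (n-1)! · 720). -/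
lemma t_closed (n : ℕ) :
    t 0 n = 2 ^ n / Nat.factorial n ∧
    t 1 n = 2 ^ n / Nat.factorial n * (((n : ℝ) + 3) / 3) ∧
    t 2 n = 2 ^ n / Nat.factorial n * ((5 * (n : ℝ) ^ 2 + 43 * n + 90) / 90) ∧
    t 3 n = 2 ^ n / Nat.factorial n *
      (((n : ℝ) + 7) * (35 * (n : ℝ) ^ 2 + 343 * n + 810) / 5670) := by
  induction n with
  | zero => norm_num [t]
  | succ n ih =>
    obtain ⟨h0, h1, h2, h3⟩ := ih
    have hf : (Nat.factorial n : ℝ) ≠ 0 := by positivity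
    have hf' : (Nat.factorial (n + 1) : ℝ) = ((n : ℝ) + 1) * Nat.factorial n := by
      push_cast [Nat.factorial_succ]; ring
    have hn1 : (n : ℝ) + 1 ≠ 0 := by positivity
    have hn3 : (n : ℝ) + 3 ≠ 0 := by positivity
    have hn5 : (n : ℝ) + 5 ≠ 0 := by positivity
    have hn7 : (n : ℝ) + 7 ≠ 0 := by positivity
    simp only [t, Finset.sum_range_succ, Finset.sum_range_zero, h0, h1, h2, h3, hf']
    push_cast
    refine ⟨?_, ?_, ?_, ?_⟩ <;> field_simp <;> ring

/-- Equation (20) of the paper: for `n ≥ 1`,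
`t_3(n-1) = 2^{n+3} · (3 + n/2) · (35n² + 273n + 502) / (63 · (n-1)! · 720)`. -/
theorem t_three_eq (n : ℕ) (hn : 1 ≤ n) :
    t 3 (n - 1) =
      2 ^ (n + 3) * (3 + (n : ℝ) / 2) * (35 * (n : ℝ) ^ 2 + 273 * (n : ℝ) + 502) /
        (63 * (Nat.factorial (n - 1) : ℝ) * 720) := by
  obtain ⟨m, rfl⟩ := Nat.exists_eq_add_of_le hn
  simp only [Nat.add_sub_cancel_left] at *
  rw [(t_closed m).2.2.2]
  have hf : (Nat.factorial m : ℝ) ≠ 0 := by positivity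
  push_cast
  rw [pow_add]
  field_simp
  ring
end

section
/- For every natural number n ≥ 2 and every real number x ≠ 0, writing T(j,x) := (arctan(x)/x)^j, one has (x²/n) · (d²/dx²) T(n,x) = (n+1)·T(n,x) − (2(n + (n+1)x²)/(1+x²)²)·T(n-1,x) + ((n-1)/(1+x²)²)·T(n-2,x), where the second derivative is taken at the point x of the function y ↦ (arctan(y)/y)^n. -/
open Real

lemma arctan_div_hasDerivAt (y : ℝ) (hy : y ≠ 0) :
    HasDerivAt (fun z => Real.arctan z / z)
      (1 / (y * (1 + y ^ 2)) - Real.arctan y / y ^ 2) y := by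
  have h := (Real.hasDerivAt_arctan y).div (hasDerivAt_id y) hy
  refine h.congr_deriv ?_
  have h1 : (1 : ℝ) + y ^ 2 ≠ 0 := by positivity
  simp only [id]
  field_simp

lemma arctan_div_deriv2 (y : ℝ) (hy : y ≠ 0) :
    HasDerivAt (fun z => 1 / (z * (1 + z ^ 2)) - Real.arctan z / z ^ 2)
      (-2 / (y ^ 2 * (1 + y ^ 2)) - 2 / (1 + y ^ 2) ^ 2 + 2 * Real.arctan y / y ^ 3) y := by
  have h1 : (1 : ℝ) + y ^ 2 ≠ 0 := by positivity
  have hmul : y * (1 + y ^ 2) ≠ 0 := mul_ne_zero hy h1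
  have hden : HasDerivAt (fun z : ℝ => z * (1 + z ^ 2)) (1 * (1 + y ^ 2) + y * (2 * y ^ 1)) y :=
    (hasDerivAt_id y).mul ((hasDerivAt_pow 2 y).const_add 1)
  have hA : HasDerivAt (fun z : ℝ => 1 / (z * (1 + z ^ 2)))
      ((0 * (y * (1 + y ^ 2)) - 1 * (1 * (1 + y ^ 2) + y * (2 * y ^ 1))) / (y * (1 + y ^ 2)) ^ 2)
      y := (hasDerivAt_const y 1).div hden hmul
  have hB : HasDerivAt (fun z : ℝ => Real.arctan z / z ^ 2)
      ((1 / (1 + y ^ 2) * y ^ 2 - Real.arctan y * (2 * y ^ 1)) / (y ^ 2) ^ 2) y :=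
    (Real.hasDerivAt_arctan y).div (hasDerivAt_pow 2 y) (pow_ne_zero 2 hy)
  have h := hA.sub hB
  refine h.congr_deriv ?_
  field_simp
  ring

/-- Equation (21) of the paper: with `T(j,x) = (arctan(x)/x)^j`, for `n ≥ 2` and `x ≠ 0`,
`(x²/n)·T''(n,x) = (n+1)·T(n,x) − (2(n+(n+1)x²)/(1+x²)²)·T(n-1,x)
  + ((n-1)/(1+x²)²)·T(n-2,x)`. -/
theorem arctan_power_ode (n : ℕ) (hn : 2 ≤ n) (x : ℝ) (hx : x ≠ 0)
    (T : ℕ → ℝ → ℝ) (hT : ∀ (j : ℕ) (y : ℝ), T j y = (Real.arctan y / y) ^ j) :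
    (x ^ 2 / (n : ℝ)) * iteratedDeriv 2 (T n) x =
      ((n : ℝ) + 1) * T n x -
        (2 * ((n : ℝ) + ((n : ℝ) + 1) * x ^ 2) / (1 + x ^ 2) ^ 2) * T (n - 1) x +
        (((n : ℝ) - 1) / (1 + x ^ 2) ^ 2) * T (n - 2) x := by
  obtain ⟨m, rfl⟩ : ∃ m, n = m + 2 := ⟨n - 2, by omega⟩
  have hTn : T (m + 2) = fun y => (Real.arctan y / y) ^ (m + 2) := funext fun y => hT _ y
  set D1 : ℝ → ℝ := fun y => ((m : ℝ) + 2) *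
    ((Real.arctan y / y) ^ (m + 1) * (1 / (y * (1 + y ^ 2)) - Real.arctan y / y ^ 2)) with hD1def
  have hD1at : ∀ y : ℝ, y ≠ 0 → HasDerivAt (T (m + 2)) (D1 y) y := by
    intro y hy
    rw [hTn]
    have h := (arctan_div_hasDerivAt y hy).pow (m + 2)
    refine h.congr_deriv ?_
    simp only [hD1def, Nat.add_sub_cancel]
    push_cast
    ring
  have heq : deriv (T (m + 2)) =ᶠ[nhds x] D1 := by
    filter_upwards [isOpen_compl_singleton.mem_nhds hx] with y hy
    exact (hD1at y hy).deriv
  have hD1' : HasDerivAt D1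
      (((m : ℝ) + 2) *
        ((((m : ℝ) + 1) * (Real.arctan x / x) ^ m *
            (1 / (x * (1 + x ^ 2)) - Real.arctan x / x ^ 2)) *
            (1 / (x * (1 + x ^ 2)) - Real.arctan x / x ^ 2) +
          (Real.arctan x / x) ^ (m + 1) *
            (-2 / (x ^ 2 * (1 + x ^ 2)) - 2 / (1 + x ^ 2) ^ 2 +
              2 * Real.arctan x / x ^ 3))) x := by
    have h := ((((arctan_div_hasDerivAt x hx).pow (m + 1)).mul
      (arctan_div_deriv2 x hx)).const_mul ((m : ℝ) + 2))
    refine h.congr_deriv ?_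
    simp only [Nat.add_sub_cancel, Pi.pow_apply]
    push_cast
    ring
  have hit : iteratedDeriv 2 (T (m + 2)) x =
      ((m : ℝ) + 2) *
        ((((m : ℝ) + 1) * (Real.arctan x / x) ^ m *
            (1 / (x * (1 + x ^ 2)) - Real.arctan x / x ^ 2)) *
            (1 / (x * (1 + x ^ 2)) - Real.arctan x / x ^ 2) +
          (Real.arctan x / x) ^ (m + 1) *
            (-2 / (x ^ 2 * (1 + x ^ 2)) - 2 / (1 + x ^ 2) ^ 2 +
              2 * Real.arctan x / x ^ 3)) := by
    rw [show (2 : ℕ) = 1 + 1 from rfl, iteratedDeriv_succ, iteratedDeriv_one]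
    rw [heq.deriv_eq]
    exact hD1'.deriv
  rw [hit, hT, hT, hT]
  have h1 : (1 : ℝ) + x ^ 2 ≠ 0 := by positivity
  have h2 : ((m : ℝ) + 2) ≠ 0 := by positivity
  simp only [show m + 2 - 1 = m + 1 from rfl, show m + 2 - 2 = m from rfl]
  push_cast
  simp only [div_pow]
  field_simp
  ring
end

section
/- For all natural numbers m ≥ 2 and n ≥ 2 with 2m ≠ n + 2, the coefficients satisfy the five-part recursion (2m − n − 2) · t_m(n) = −2(n − 2m + 4)·t_{m-1}(n) + (n − 2m + 6)·t_{m-2}(n) − (4(n+1)/(2m+n))·t_m(n-1) + (4(n+2)/(2m+n−2))·t_{m-1}(n-1) + (4/(2m+n−1))·t_m(n-2). -/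
/-- Telescoping step relation: peeling off the last term of the defining sum. -/
lemma t_step (k n : ℕ) :
    t (k + 1) (n + 1) = t k (n + 1) + t (k + 1) n / ((k : ℝ) + 1 + ((n : ℝ) + 1) / 2) := by
  simp [t, Finset.sum_range_succ]

/-- Equation (22) of the paper: the five-part recursion, for `m ≥ 2`, `n ≥ 2`,
`2m ≠ n + 2`:
`(2m − n − 2)·t_m(n) = −2(n − 2m + 4)·t_{m-1}(n) + (n − 2m + 6)·t_{m-2}(n)
  − (4(n+1)/(2m+n))·t_m(n-1) + (4(n+2)/(2m+n−2))·t_{m-1}(n-1)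
  + (4/(2m+n−1))·t_m(n-2)`. -/
theorem t_five_part_recursion (m n : ℕ) (hm : 2 ≤ m) (hn : 2 ≤ n)
    (h : 2 * m ≠ n + 2) :
    (2 * (m : ℝ) - (n : ℝ) - 2) * t m n =
      -2 * ((n : ℝ) - 2 * (m : ℝ) + 4) * t (m - 1) n +
        ((n : ℝ) - 2 * (m : ℝ) + 6) * t (m - 2) n -
        (4 * ((n : ℝ) + 1) / (2 * (m : ℝ) + (n : ℝ))) * t m (n - 1) +
        (4 * ((n : ℝ) + 2) / (2 * (m : ℝ) + (n : ℝ) - 2)) * t (m - 1) (n - 1) +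
        (4 / (2 * (m : ℝ) + (n : ℝ) - 1)) * t m (n - 2) := by
  obtain ⟨a, rfl⟩ : ∃ a, m = a + 2 := ⟨m - 2, by omega⟩
  obtain ⟨b, rfl⟩ : ∃ b, n = b + 2 := ⟨n - 2, by omega⟩
  simp only [show a + 2 - 1 = a + 1 from rfl, show a + 2 - 2 = a from rfl,
    show b + 2 - 1 = b + 1 from rfl, show b + 2 - 2 = b from rfl]
  have ha : (0:ℝ) ≤ (a:ℝ) := Nat.cast_nonneg a
  have hb : (0:ℝ) ≤ (b:ℝ) := Nat.cast_nonneg b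
  have d1 : ((a:ℝ) + 1 + 1 + ((b:ℝ) + 1 + 1) / 2) ≠ 0 := by positivity
  have d2 : ((a:ℝ) + 1 + ((b:ℝ) + 1 + 1) / 2) ≠ 0 := by positivity
  have d3 : ((a:ℝ) + 1 + 1 + ((b:ℝ) + 1) / 2) ≠ 0 := by positivity
  have h1 := t_step (a + 1) (b + 1)
  have h2 := t_step a (b + 1)
  have h3 := t_step (a + 1) b
  push_cast at h1 h2 h3
  have e1 : t (a + 2) (b + 1) =
      ((a:ℝ) + 1 + 1 + ((b:ℝ) + 1 + 1) / 2) * (t (a + 2) (b + 2) - t (a + 1) (b + 2)) := by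
    field_simp at h1 ⊢; linarith [h1]
  have e2 : t (a + 1) (b + 1) =
      ((a:ℝ) + 1 + ((b:ℝ) + 1 + 1) / 2) * (t (a + 1) (b + 2) - t a (b + 2)) := by
    field_simp at h2 ⊢; linarith [h2]
  have e3 : t (a + 2) b =
      ((a:ℝ) + 1 + 1 + ((b:ℝ) + 1) / 2) * (t (a + 2) (b + 1) - t (a + 1) (b + 1)) := by
    field_simp at h3 ⊢; linarith [h3]
  rw [e3, e1, e2]
  push_cast
  have D1 : (2 * ((a:ℝ) + 2) + ((b:ℝ) + 2)) ≠ 0 := by positivity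
  have D2 : (2 * ((a:ℝ) + 2) + ((b:ℝ) + 2) - 2) ≠ 0 := by
    have : (0:ℝ) < 2 * ((a:ℝ) + 2) + ((b:ℝ) + 2) - 2 := by linarith
    linarith
  have D3 : (2 * ((a:ℝ) + 2) + ((b:ℝ) + 2) - 1) ≠ 0 := by
    have : (0:ℝ) < 2 * ((a:ℝ) + 2) + ((b:ℝ) + 2) - 1 := by linarith
    linarith
  field_simp
  ring
end

section
/- For every natural number m ≥ 1 and every complex number c, i^m · (c/(2i)) · ∑_{l=0}^{m} P_{m-1}(1 + c/(2i) − l) / ((m−l)! · l!) = (2/m) · ∑_{l=0}^{⌊(m-1)/2⌋} (c/2)^{m-2l} · (−1)^l · t_l(m−2l−1), where P_{m-1}(y) = y(y+1)⋯(y+m−2) is the ascending Pochhammer polynomial of degree m−1 (with P_0 ≡ 1) evaluated in ℂ, and t_l(m−2l−1) is regarded as a complex number. -/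
open Polynomial Finset

noncomputable def a (n k : ℕ) : ℝ :=
  if 1 ≤ k ∧ k ≤ n ∧ (n - k) % 2 = 0 then t ((n - k) / 2) (k - 1) else 0

lemma t_zero_succ (n : ℕ) : t 0 (n + 1) = t 0 n / (((n : ℝ) + 1) / 2) := by
  rw [t]; simp

lemma t_succ_succ (k n : ℕ) :
    t (k + 1) (n + 1) = t k (n + 1) + t (k + 1) n / (((k : ℝ) + 1) + ((n : ℝ) + 1) / 2) := by
  rw [t, t, Finset.sum_range_succ]
  push_cast
  ring

lemma key_a (j k : ℕ) :
    a (j + 3) k = 2 / ((j : ℝ) + 2) * a (j + 2) (k - 1) + a (j + 1) k := by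
  have hj2 : ((j : ℝ) + 2) ≠ 0 := by positivity
  unfold a
  split_ifs with h1 h2 h3 h4 h5 h6 h7
  · obtain ⟨L, hL⟩ : ∃ L, j + 1 - k = 2 * L := ⟨(j + 1 - k) / 2, by omega⟩
    obtain ⟨ν, hν⟩ : ∃ ν, k = ν + 2 := ⟨k - 2, by omega⟩
    subst hν
    simp only [show (j + 3 - (ν + 2)) / 2 = L + 1 by omega,
      show (j + 2 - (ν + 2 - 1)) / 2 = L + 1 by omega,
      show (j + 1 - (ν + 2)) / 2 = L by omega,
      show ν + 2 - 1 = ν + 1 by omega, show (j + 2 - (ν + 1)) / 2 = L + 1 by omega,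
      show ν + 2 - 1 - 1 = ν by omega,
      show ν + 1 - 1 = ν by omega]
    rw [t_succ_succ]
    have e6 : ((L : ℝ) + 1) + ((ν : ℝ) + 1) / 2 = ((j : ℝ) + 2) / 2 := by
      have h : 2 * L + ν + 3 = j + 2 := by omega
      have := congrArg (Nat.cast : ℕ → ℝ) h
      push_cast at this
      linarith
    rw [e6]
    field_simp
    ring
  · have hk : k = j + 3 := by omega
    subst hk
    simp only [show (j + 3 - (j + 3)) / 2 = 0 by omega,
      show (j + 2 - (j + 3 - 1)) / 2 = 0 by omega,
      show j + 3 - 1 = j + 2 by omega, show j + 2 - 1 = j + 1 by omega]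
    rw [show j + 2 = (j + 1) + 1 from rfl, t_zero_succ]
    push_cast
    field_simp
    simp only [Nat.sub_self, Nat.zero_div]
    ring
  · have hk : k = 1 := by omega
    subst hk
    simp [t]
  · exfalso; omega
  · exfalso; omega
  · exfalso; omega
  · exfalso; omega
  · simp

lemma ascPochhammer_eval_succ_left' (n : ℕ) (z : ℂ) :
    (ascPochhammer ℂ (n + 1)).eval z = z * (ascPochhammer ℂ n).eval (z + 1) := by
  rw [ascPochhammer_succ_left]
  simp [Polynomial.eval_comp]

lemma Srec (k : ℕ) (x : ℂ) :
    ((k : ℂ) + 3) * ∑ l ∈ range (k + 4),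
        (ascPochhammer ℂ (k + 2)).eval (1 + x - (l : ℂ)) /
          ((Nat.factorial (k + 3 - l) : ℂ) * (Nat.factorial l : ℂ)) =
    2 * x * ∑ l ∈ range (k + 3),
        (ascPochhammer ℂ (k + 1)).eval (1 + x - (l : ℂ)) /
          ((Nat.factorial (k + 2 - l) : ℂ) * (Nat.factorial l : ℂ))
    + ((k : ℂ) + 1) * ∑ l ∈ range (k + 2),
        (ascPochhammer ℂ k).eval (1 + x - (l : ℂ)) /
          ((Nat.factorial (k + 1 - l) : ℂ) * (Nat.factorial l : ℂ)) := by
  have hfacne : ∀ l : ℕ, (Nat.factorial l : ℂ) ≠ 0 :=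
    fun l => Nat.cast_ne_zero.mpr (Nat.factorial_ne_zero l)
  set A : ℕ → ℂ := fun l => ((k : ℂ) + 3) *
      (ascPochhammer ℂ (k + 2)).eval (1 + x - (l : ℂ)) /
        ((Nat.factorial (k + 3 - l) : ℂ) * (Nat.factorial l : ℂ)) with hA
  set B : ℕ → ℂ := fun l => 2 * x * ((k : ℂ) + 3 - l) *
      (ascPochhammer ℂ (k + 1)).eval (1 + x - (l : ℂ)) /
        ((Nat.factorial (k + 3 - l) : ℂ) * (Nat.factorial l : ℂ)) with hBdef
  set C : ℕ → ℂ := fun l => ((k : ℂ) + 1) * ((k : ℂ) + 3 - l) * ((k : ℂ) + 2 - l) *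
      (ascPochhammer ℂ k).eval (1 + x - (l : ℂ)) /
        ((Nat.factorial (k + 3 - l) : ℂ) * (Nat.factorial l : ℂ)) with hCdef
  set g : ℕ → ℂ := fun l => (1 - x) * l *
      (ascPochhammer ℂ (k + 1)).eval (1 + x - (l : ℂ)) /
        ((Nat.factorial (k + 3 - l) : ℂ) * (Nat.factorial l : ℂ)) with hgdef
  have hB3 : B (k + 3) = 0 := by
    simp only [hBdef]
    push_cast
    rw [show (k : ℂ) + 3 - ((k : ℂ) + 3) = 0 by ring]
    simp
  have hC3 : C (k + 3) = 0 := by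
    simp only [hCdef]
    push_cast
    rw [show (k : ℂ) + 3 - ((k : ℂ) + 3) = 0 by ring]
    simp
  have eA : ((k : ℂ) + 3) * ∑ l ∈ range (k + 4),
      (ascPochhammer ℂ (k + 2)).eval (1 + x - (l : ℂ)) /
        ((Nat.factorial (k + 3 - l) : ℂ) * (Nat.factorial l : ℂ)) = ∑ l ∈ range (k + 4), A l := by
    rw [Finset.mul_sum]
    exact Finset.sum_congr rfl fun l _ => by simp [hA, mul_div_assoc]
  have eB : 2 * x * ∑ l ∈ range (k + 3),
      (ascPochhammer ℂ (k + 1)).eval (1 + x - (l : ℂ)) /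
        ((Nat.factorial (k + 2 - l) : ℂ) * (Nat.factorial l : ℂ)) = ∑ l ∈ range (k + 4), B l := by
    conv_rhs => rw [Finset.sum_range_succ]
    rw [hB3, add_zero, Finset.mul_sum]
    refine Finset.sum_congr rfl fun l hl => ?_
    have hl' : l ≤ k + 2 := by
      have := Finset.mem_range.mp hl; omega
    have hfac : Nat.factorial (k + 3 - l) = (k + 3 - l) * Nat.factorial (k + 2 - l) := by
      rw [show k + 3 - l = (k + 2 - l) + 1 by omega, Nat.factorial_succ]
    have hc : ((k + 3 - l : ℕ) : ℂ) = (k : ℂ) + 3 - l := by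
      rw [Nat.cast_sub (by omega)]; push_cast; ring
    have hne : ((k : ℂ) + 3 - l) ≠ 0 := by
      rw [← hc]; exact Nat.cast_ne_zero.mpr (by omega)
    have hf2 : (Nat.factorial (k + 2 - l) : ℂ) ≠ 0 := hfacne _
    have hfl : (Nat.factorial l : ℂ) ≠ 0 := hfacne _
    simp only [hBdef, hfac, Nat.cast_mul, hc]
    field_simp
  have eC : ((k : ℂ) + 1) * ∑ l ∈ range (k + 2),
      (ascPochhammer ℂ k).eval (1 + x - (l : ℂ)) /
        ((Nat.factorial (k + 1 - l) : ℂ) * (Nat.factorial l : ℂ)) = ∑ l ∈ range (k + 4), C l := by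
    have hC2 : C (k + 2) = 0 := by
      simp only [hCdef]
      push_cast
      rw [show (k : ℂ) + 2 - ((k : ℂ) + 2) = 0 by ring]
      simp
    conv_rhs => rw [Finset.sum_range_succ]
    rw [hC3, add_zero]
    conv_rhs => rw [Finset.sum_range_succ]
    rw [hC2, add_zero, Finset.mul_sum]
    refine Finset.sum_congr rfl fun l hl => ?_
    have hl' : l ≤ k + 1 := by
      have := Finset.mem_range.mp hl; omega
    have hfac : Nat.factorial (k + 3 - l) =
        (k + 3 - l) * ((k + 2 - l) * Nat.factorial (k + 1 - l)) := by
      rw [show k + 3 - l = (k + 2 - l) + 1 by omega, Nat.factorial_succ,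
        show k + 2 - l = (k + 1 - l) + 1 by omega, Nat.factorial_succ]
    have hc3 : ((k + 3 - l : ℕ) : ℂ) = (k : ℂ) + 3 - l := by
      rw [Nat.cast_sub (by omega)]; push_cast; ring
    have hc2 : ((k + 2 - l : ℕ) : ℂ) = (k : ℂ) + 2 - l := by
      rw [Nat.cast_sub (by omega)]; push_cast; ring
    have hne3 : ((k : ℂ) + 3 - l) ≠ 0 := by
      rw [← hc3]; exact Nat.cast_ne_zero.mpr (by omega)
    have hne2 : ((k : ℂ) + 2 - l) ≠ 0 := by
      rw [← hc2]; exact Nat.cast_ne_zero.mpr (by omega)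
    have hf1 : (Nat.factorial (k + 1 - l) : ℂ) ≠ 0 := hfacne _
    have hfl : (Nat.factorial l : ℂ) ≠ 0 := hfacne _
    simp only [hCdef, hfac, Nat.cast_mul, hc3, hc2]
    field_simp
  rw [eA, eB, eC, ← Finset.sum_add_distrib, ← sub_eq_zero, ← Finset.sum_sub_distrib]
  have key : ∀ l ∈ range (k + 3), A l - (B l + C l) = g (l + 1) - g l := by
    intro l hl
    have hl' : l ≤ k + 2 := by
      have := Finset.mem_range.mp hl; omega
    have hfac : Nat.factorial (k + 3 - l) = (k + 3 - l) * Nat.factorial (k + 2 - l) := by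
      rw [show k + 3 - l = (k + 2 - l) + 1 by omega, Nat.factorial_succ]
    have hc : ((k + 3 - l : ℕ) : ℂ) = (k : ℂ) + 3 - l := by
      rw [Nat.cast_sub (by omega)]; push_cast; ring
    have hne : ((k : ℂ) + 3 - l) ≠ 0 := by
      rw [← hc]; exact Nat.cast_ne_zero.mpr (by omega)
    have hfg : k + 3 - (l + 1) = k + 2 - l := by omega
    have e2 : (ascPochhammer ℂ (k + 2)).eval (1 + x - (l : ℂ)) =
        (ascPochhammer ℂ k).eval (1 + x - (l : ℂ)) * ((1 + x - (l : ℂ)) + k) *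
          ((1 + x - (l : ℂ)) + ((k : ℂ) + 1)) := by
      rw [show k + 2 = (k + 1) + 1 from rfl, ascPochhammer_succ_eval, ascPochhammer_succ_eval]
      push_cast; ring
    have e1 : (ascPochhammer ℂ (k + 1)).eval (1 + x - (l : ℂ)) =
        (ascPochhammer ℂ k).eval (1 + x - (l : ℂ)) * ((1 + x - (l : ℂ)) + k) := by
      rw [ascPochhammer_succ_eval]
    have e3 : (ascPochhammer ℂ (k + 1)).eval (1 + x - ((l + 1 : ℕ) : ℂ)) =
        (x - l) * (ascPochhammer ℂ k).eval (1 + x - (l : ℂ)) := by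
      rw [ascPochhammer_eval_succ_left']
      push_cast
      ring_nf
    have hl1 : ((l : ℂ) + 1) ≠ 0 := by
      have h1 : ((l + 1 : ℕ) : ℂ) ≠ 0 := Nat.cast_ne_zero.mpr (by omega)
      push_cast at h1; exact h1
    have hf2 : (Nat.factorial (k + 2 - l) : ℂ) ≠ 0 := hfacne _
    have hfl : (Nat.factorial l : ℂ) ≠ 0 := hfacne _
    simp only [hA, hBdef, hCdef, hgdef, hfg, hfac, Nat.cast_mul, hc, e2, e1, e3,
      Nat.factorial_succ (n := l), Nat.cast_mul]
    push_cast
    field_simp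
    ring
  rw [Finset.sum_range_succ, Finset.sum_congr rfl key, Finset.sum_range_sub g]
  have hg0 : g 0 = 0 := by simp [hgdef]
  have hbound : A (k + 3) - (B (k + 3) + C (k + 3)) = -(g (k + 3)) := by
    rw [hB3, hC3, add_zero]
    simp only [hA, hgdef]
    have e2 : (ascPochhammer ℂ (k + 2)).eval (1 + x - ((k + 3 : ℕ) : ℂ)) =
        (ascPochhammer ℂ (k + 1)).eval (1 + x - ((k + 3 : ℕ) : ℂ)) * (x - 1) := by
      rw [show k + 2 = (k + 1) + 1 from rfl, ascPochhammer_succ_eval]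
      push_cast; ring
    rw [e2]
    have hss : k + 3 - (k + 3) = 0 := by omega
    rw [hss]
    push_cast [Nat.factorial_zero]
    have hfl : (Nat.factorial (k + 3) : ℂ) ≠ 0 := hfacne _
    field_simp
    ring
  rw [hbound, hg0]
  ring

lemma mainQ : ∀ k : ℕ,
    (∀ x : ℂ, x * ∑ l ∈ range (k + 1 + 1),
        (ascPochhammer ℂ (k + 1 - 1)).eval (1 + x - (l : ℂ)) /
          ((Nat.factorial (k + 1 - l) : ℂ) * (Nat.factorial l : ℂ)) =
      2 / ((k + 1 : ℕ) : ℂ) * ∑ j ∈ range (k + 1 + 2), ((a (k + 1) j : ℝ) : ℂ) * x ^ j) ∧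
    (∀ x : ℂ, x * ∑ l ∈ range (k + 2 + 1),
        (ascPochhammer ℂ (k + 2 - 1)).eval (1 + x - (l : ℂ)) /
          ((Nat.factorial (k + 2 - l) : ℂ) * (Nat.factorial l : ℂ)) =
      2 / ((k + 2 : ℕ) : ℂ) * ∑ j ∈ range (k + 2 + 2), ((a (k + 2) j : ℝ) : ℂ) * x ^ j) := by
  intro k
  induction k with
  | zero =>
    constructor
    · intro x
      simp [Finset.sum_range_succ, a, t]
      norm_num
      ring
    · intro x
      simp [Finset.sum_range_succ, a, t]
      norm_num
      ring
  | succ k ih =>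
    refine ⟨ih.2, ?_⟩
    intro x
    have h1 := ih.1 x
    have h2 := ih.2 x
    simp only [show k + 1 + 1 = k + 2 by omega, show k + 1 + 2 = k + 3 by omega,
      show k + 2 + 1 = k + 3 by omega, show k + 2 + 2 = k + 4 by omega,
      show k + 3 + 1 = k + 4 by omega, show k + 3 + 2 = k + 5 by omega,
      show k + 1 - 1 = k by omega, show k + 2 - 1 = k + 1 by omega,
      show k + 3 - 1 = k + 2 by omega] at h1 h2 ⊢
    -- notation
    have hK1 : ((k : ℂ) + 1) ≠ 0 := by
      have : ((k + 1 : ℕ) : ℂ) ≠ 0 := Nat.cast_ne_zero.mpr (by omega)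
      push_cast at this; exact this
    have hK2 : ((k : ℂ) + 2) ≠ 0 := by
      have : ((k + 2 : ℕ) : ℂ) ≠ 0 := Nat.cast_ne_zero.mpr (by omega)
      push_cast at this; exact this
    have hK3 : ((k : ℂ) + 3) ≠ 0 := by
      have : ((k + 3 : ℕ) : ℂ) ≠ 0 := Nat.cast_ne_zero.mpr (by omega)
      push_cast at this; exact this
    -- clear denominators in h1, h2
    rw [show ((k + 1 : ℕ) : ℂ) = (k : ℂ) + 1 by push_cast; ring] at h1
    rw [show ((k + 2 : ℕ) : ℂ) = (k : ℂ) + 2 by push_cast; ring] at h2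
    have hS' : ((k : ℂ) + 3) * (x * ∑ l ∈ range (k + 4),
          (ascPochhammer ℂ (k + 2)).eval (1 + x - (l : ℂ)) /
            ((Nat.factorial (k + 3 - l) : ℂ) * (Nat.factorial l : ℂ))) =
        2 * x * (x * ∑ l ∈ range (k + 3),
          (ascPochhammer ℂ (k + 1)).eval (1 + x - (l : ℂ)) /
            ((Nat.factorial (k + 2 - l) : ℂ) * (Nat.factorial l : ℂ)))
        + ((k : ℂ) + 1) * (x * ∑ l ∈ range (k + 2),
          (ascPochhammer ℂ k).eval (1 + x - (l : ℂ)) /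
            ((Nat.factorial (k + 1 - l) : ℂ) * (Nat.factorial l : ℂ))) := by
      linear_combination x * Srec k x
    have h1' : ((k : ℂ) + 1) * (x * ∑ l ∈ range (k + 2),
          (ascPochhammer ℂ k).eval (1 + x - (l : ℂ)) /
            ((Nat.factorial (k + 1 - l) : ℂ) * (Nat.factorial l : ℂ))) =
        2 * ∑ j ∈ range (k + 3), ((a (k + 1) j : ℝ) : ℂ) * x ^ j := by
      rw [h1]; field_simp
    have h2' : ((k : ℂ) + 2) * (x * ∑ l ∈ range (k + 3),
          (ascPochhammer ℂ (k + 1)).eval (1 + x - (l : ℂ)) /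
            ((Nat.factorial (k + 2 - l) : ℂ) * (Nat.factorial l : ℂ))) =
        2 * ∑ j ∈ range (k + 4), ((a (k + 2) j : ℝ) : ℂ) * x ^ j := by
      rw [h2]; field_simp
    -- split the target coefficient sum using key_a
    have hsplit : ((k : ℂ) + 2) * ∑ j ∈ range (k + 5), ((a (k + 3) j : ℝ) : ℂ) * x ^ j =
        2 * x * (∑ j ∈ range (k + 4), ((a (k + 2) j : ℝ) : ℂ) * x ^ j)
        + ((k : ℂ) + 2) * ∑ j ∈ range (k + 3), ((a (k + 1) j : ℝ) : ℂ) * x ^ j := by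
      have hterm : ∀ j : ℕ, ((a (k + 3) j : ℝ) : ℂ) =
          2 / ((k : ℂ) + 2) * ((a (k + 2) (j - 1) : ℝ) : ℂ) + ((a (k + 1) j : ℝ) : ℂ) := by
        intro j
        have := key_a k j
        have h := congrArg (fun r : ℝ => (r : ℂ)) this
        push_cast at h ⊢
        convert h using 2 <;> norm_num
      have e1 : ∑ j ∈ range (k + 5), ((a (k + 3) j : ℝ) : ℂ) * x ^ j =
          2 / ((k : ℂ) + 2) * ∑ j ∈ range (k + 5), ((a (k + 2) (j - 1) : ℝ) : ℂ) * x ^ j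
          + ∑ j ∈ range (k + 5), ((a (k + 1) j : ℝ) : ℂ) * x ^ j := by
        rw [Finset.mul_sum, ← Finset.sum_add_distrib]
        exact Finset.sum_congr rfl fun j _ => by rw [hterm j]; ring
      have e2 : ∑ j ∈ range (k + 5), ((a (k + 2) (j - 1) : ℝ) : ℂ) * x ^ j =
          x * ∑ j ∈ range (k + 4), ((a (k + 2) j : ℝ) : ℂ) * x ^ j := by
        rw [Finset.sum_range_succ']
        have h0 : ((a (k + 2) (0 - 1) : ℝ) : ℂ) * x ^ 0 = 0 := by
          simp [a]
        rw [h0, add_zero, Finset.mul_sum]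
        exact Finset.sum_congr rfl fun j _ => by
          simp only [Nat.add_sub_cancel]; ring
      have e3 : ∑ j ∈ range (k + 5), ((a (k + 1) j : ℝ) : ℂ) * x ^ j =
          ∑ j ∈ range (k + 3), ((a (k + 1) j : ℝ) : ℂ) * x ^ j := by
        rw [Finset.sum_range_succ, Finset.sum_range_succ]
        have z1 : a (k + 1) (k + 4) = 0 := by unfold a; rw [if_neg]; omega
        have z2 : a (k + 1) (k + 3) = 0 := by unfold a; rw [if_neg]; omega
        rw [z1, z2]
        push_cast
        ring
      rw [e1, e2, e3]
      field_simp
    -- final assembly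
    rw [show ((k + 3 : ℕ) : ℂ) = (k : ℂ) + 3 by push_cast; ring]
    rw [div_mul_eq_mul_div, eq_div_iff hK3, mul_comm _ ((k:ℂ)+3)]
    -- goal : (k+3) * (x * Σ1) = 2 * Sa3  -- modulo arrangement
    have hKey : ((k : ℂ) + 2) * (((k : ℂ) + 3) * (x * ∑ l ∈ range (k + 4),
          (ascPochhammer ℂ (k + 2)).eval (1 + x - (l : ℂ)) /
            ((Nat.factorial (k + 3 - l) : ℂ) * (Nat.factorial l : ℂ)))
        - 2 * ∑ j ∈ range (k + 5), ((a (k + 3) j : ℝ) : ℂ) * x ^ j) = 0 := by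
      linear_combination ((k : ℂ) + 2) * hS' + 2 * x * h2' + h1' * ((k : ℂ) + 2) - 2 * hsplit
    have := mul_eq_zero.mp hKey
    rcases this with h | h
    · exact absurd h hK2
    · linear_combination h

lemma reindex (n : ℕ) (hn : 1 ≤ n) (x : ℂ) :
    ∑ j ∈ range (n + 2), ((a n j : ℝ) : ℂ) * x ^ j =
      ∑ l ∈ range ((n - 1) / 2 + 1), x ^ (n - 2 * l) * ((t l (n - 2 * l - 1) : ℝ) : ℂ) := by
  have step1 : ∑ j ∈ range (n + 2), ((a n j : ℝ) : ℂ) * x ^ j =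
      ∑ j ∈ (range (n + 2)).filter (fun j => 1 ≤ j ∧ j ≤ n ∧ (n - j) % 2 = 0),
        ((t ((n - j) / 2) (j - 1) : ℝ) : ℂ) * x ^ j := by
    rw [Finset.sum_filter]
    refine Finset.sum_congr rfl fun j _ => ?_
    unfold a
    split_ifs with h
    · rfl
    · simp
  rw [step1]
  refine Finset.sum_nbij' (fun j => (n - j) / 2) (fun l => n - 2 * l) ?_ ?_ ?_ ?_ ?_
  · intro j hj
    simp only [Finset.mem_filter, Finset.mem_range] at hj ⊢
    omega
  · intro l hl
    simp only [Finset.mem_filter, Finset.mem_range] at hl ⊢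
    omega
  · intro j hj
    simp only [Finset.mem_filter, Finset.mem_range] at hj
    show n - 2 * ((n - j) / 2) = j
    omega
  · intro l hl
    simp only [Finset.mem_range] at hl
    show (n - (n - 2 * l)) / 2 = l
    omega
  · intro j hj
    simp only [Finset.mem_filter, Finset.mem_range] at hj
    show ((t ((n - j) / 2) (j - 1) : ℝ) : ℂ) * x ^ j =
      x ^ (n - 2 * ((n - j) / 2)) * ((t ((n - j) / 2) (n - 2 * ((n - j) / 2) - 1) : ℝ) : ℂ)
    have e1 : n - 2 * ((n - j) / 2) = j := by omega
    rw [e1]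
    ring

/-- Equation (25) of the paper (the Lemma): for `m ≥ 1` and `c ∈ ℂ`,
`i^m · (c/(2i)) · ∑_{l=0}^{m} P_{m-1}(1 + c/(2i) − l) / ((m−l)!·l!)
  = (2/m) · ∑_{l=0}^{⌊(m-1)/2⌋} (c/2)^{m-2l} · (−1)^l · t_l(m−2l−1)`,
where `P_{m-1}(y) = y(y+1)⋯(y+m−2)` is the ascending Pochhammer polynomial of
degree `m−1`. -/
theorem arctan_power_lemma (m : ℕ) (hm : 1 ≤ m) (c : ℂ) :
    Complex.I ^ m * (c / (2 * Complex.I)) *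
        ∑ l ∈ Finset.range (m + 1),
          Polynomial.eval (1 + c / (2 * Complex.I) - (l : ℂ)) (ascPochhammer ℂ (m - 1)) /
            ((Nat.factorial (m - l) : ℂ) * (Nat.factorial l : ℂ)) =
      (2 / (m : ℂ)) *
        ∑ l ∈ Finset.range ((m - 1) / 2 + 1),
          (c / 2) ^ (m - 2 * l) * (-1 : ℂ) ^ l * (t l (m - 2 * l - 1) : ℂ) := by
  set x : ℂ := c / (2 * Complex.I) with hx
  have hI : Complex.I ≠ 0 := Complex.I_ne_zero
  have hc2 : c / 2 = Complex.I * x := by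
    rw [hx]; field_simp
  -- main identity in x-form
  have hQ : x * ∑ l ∈ range (m + 1),
      (ascPochhammer ℂ (m - 1)).eval (1 + x - (l : ℂ)) /
        ((Nat.factorial (m - l) : ℂ) * (Nat.factorial l : ℂ)) =
      2 / (m : ℂ) * ∑ j ∈ range (m + 2), ((a m j : ℝ) : ℂ) * x ^ j := by
    rcases Nat.even_or_odd m with he | ho
    · obtain ⟨p, hp⟩ := he
      have hp1 : 1 ≤ p := by omega
      obtain ⟨q, hq⟩ : ∃ q, p = q + 1 := ⟨p - 1, by omega⟩
      have := (mainQ (2 * q)).2 x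
      rw [show 2 * q + 2 = m by omega] at this
      exact this
    · obtain ⟨p, hp⟩ := ho
      rcases Nat.eq_zero_or_pos p with h0 | hpos
      · have := (mainQ 0).1 x
        rw [show (0:ℕ) + 1 = m by omega] at this
        exact this
      · have := (mainQ (2 * p - 1)).2 x
        rw [show 2 * p - 1 + 2 = m by omega] at this
        exact this
  rw [reindex m hm x] at hQ
  -- transform RHS of the target
  have hRHS : ∑ l ∈ Finset.range ((m - 1) / 2 + 1),
      (c / 2) ^ (m - 2 * l) * (-1 : ℂ) ^ l * (t l (m - 2 * l - 1) : ℂ) =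
      Complex.I ^ m * ∑ l ∈ Finset.range ((m - 1) / 2 + 1),
        x ^ (m - 2 * l) * ((t l (m - 2 * l - 1) : ℝ) : ℂ) := by
    rw [Finset.mul_sum]
    refine Finset.sum_congr rfl fun l hl => ?_
    have hl' : 2 * l + 1 ≤ m := by
      have := Finset.mem_range.mp hl; omega
    have hIp : Complex.I ^ (m - 2 * l) * (-1 : ℂ) ^ l = Complex.I ^ m := by
      have : Complex.I ^ (m - 2 * l) * ((-1 : ℂ)) ^ l =
          Complex.I ^ (m - 2 * l) * (Complex.I ^ 2) ^ l := by
        rw [Complex.I_sq]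
      rw [this, ← pow_mul, ← pow_add, show m - 2 * l + 2 * l = m by omega]
    calc (c / 2) ^ (m - 2 * l) * (-1 : ℂ) ^ l * (t l (m - 2 * l - 1) : ℂ)
        = (Complex.I * x) ^ (m - 2 * l) * (-1 : ℂ) ^ l * (t l (m - 2 * l - 1) : ℂ) := by
          rw [hc2]
      _ = (Complex.I ^ (m - 2 * l) * (-1 : ℂ) ^ l) * (x ^ (m - 2 * l) * (t l (m - 2 * l - 1) : ℂ)) := by
          rw [mul_pow]; ring
      _ = Complex.I ^ m * (x ^ (m - 2 * l) * (t l (m - 2 * l - 1) : ℂ)) := by rw [hIp]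
  rw [hRHS]
  calc Complex.I ^ m * x * ∑ l ∈ Finset.range (m + 1),
        (ascPochhammer ℂ (m - 1)).eval (1 + x - (l : ℂ)) /
          ((Nat.factorial (m - l) : ℂ) * (Nat.factorial l : ℂ))
      = Complex.I ^ m * (x * ∑ l ∈ Finset.range (m + 1),
          (ascPochhammer ℂ (m - 1)).eval (1 + x - (l : ℂ)) /
            ((Nat.factorial (m - l) : ℂ) * (Nat.factorial l : ℂ))) := by ring
    _ = Complex.I ^ m * (2 / (m : ℂ) * ∑ l ∈ Finset.range ((m - 1) / 2 + 1),
          x ^ (m - 2 * l) * ((t l (m - 2 * l - 1) : ℝ) : ℂ)) := by rw [hQ]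
    _ = 2 / (m : ℂ) * (Complex.I ^ m * ∑ l ∈ Finset.range ((m - 1) / 2 + 1),
          x ^ (m - 2 * l) * ((t l (m - 2 * l - 1) : ℝ) : ℂ)) := by ring
end

section
/- For every natural number m ≥ 1, ∑_{l=0}^{⌊(m-1)/2⌋} t_l(m − 2l − 1) = m. -/
lemma t_zero (k : ℕ) : t k 0 = 1 := rfl

/-- Termwise difference identity: `(2l+m+3) * t_{l+1}(m+1) = (2l+m+3) * t_l(m+1) + 2 t_{l+1}(m)`. -/
lemma t_step_s13 (l m : ℕ) :
    (2 * (l : ℝ) + (m : ℝ) + 3) * t (l + 1) (m + 1)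
      = (2 * (l : ℝ) + (m : ℝ) + 3) * t l (m + 1) + 2 * t (l + 1) m := by
  have hd : ((l : ℝ) + 1) + ((m : ℝ) + 1) / 2 ≠ 0 := by positivity
  have h1 : t (l + 1) (m + 1)
      = t l (m + 1) + t (l + 1) m / (((l : ℝ) + 1) + ((m : ℝ) + 1) / 2) := by
    rw [t_succ (l + 1) m, t_succ l m, Finset.sum_range_succ]
    push_cast
    ring_nf
    rw [add_comm]; congr 1; exact Finset.sum_congr rfl fun x _ => by ring
  rw [h1]
  field_simp
  ring

/-- `(m+1) * t_0(m+1) = 2 * t_0(m)`. -/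
lemma t_base (m : ℕ) : ((m : ℝ) + 1) * t 0 (m + 1) = 2 * t 0 m := by
  have hd : ((m : ℝ) + 1) / 2 ≠ 0 := by positivity
  rw [t_succ 0 m, Finset.sum_range_one]
  push_cast
  field_simp
  ring

/-- The diagonal sums `a N = ∑_{2l+n = N} t_l(n)`. -/
noncomputable def aa (N : ℕ) : ℝ := ∑ l ∈ Finset.range (N / 2 + 1), t l (N - 2 * l)

lemma aa_zero : aa 0 = 1 := by
  unfold aa
  norm_num [t_zero]

lemma aa_one : aa 1 = 2 := by
  have h := t_base 0
  unfold aa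
  norm_num [t_zero] at h ⊢
  linarith

lemma aa_even (p : ℕ) :
    aa (2 * p + 2) = t 0 (2 * p + 2) + (∑ l ∈ Finset.range p, t (l + 1) (2 * p - 2 * l)) + 1 := by
  unfold aa
  have h : (2 * p + 2) / 2 + 1 = p + 2 := by omega
  rw [h, Finset.sum_range_succ, Finset.sum_range_succ']
  have h0 : 2 * p + 2 - 2 * (p + 1) = 0 := by omega
  rw [h0, t_zero]
  have h1 : 2 * p + 2 - 2 * 0 = 2 * p + 2 := by omega
  rw [h1]
  have h2 : ∀ l ∈ Finset.range p, t (l + 1) (2 * p + 2 - 2 * (l + 1)) = t (l + 1) (2 * p - 2 * l) := by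
    intro l hl
    congr 1
    omega
  rw [Finset.sum_congr rfl h2]
  ring

lemma aa_even' (p : ℕ) :
    aa (2 * p) = (∑ l ∈ Finset.range p, t l (2 * p - 2 * l)) + 1 := by
  unfold aa
  have h : (2 * p) / 2 + 1 = p + 1 := by omega
  rw [h, Finset.sum_range_succ]
  have h0 : 2 * p - 2 * p = 0 := by omega
  rw [h0, t_zero]

lemma aa_odd (p : ℕ) :
    aa (2 * p + 1) = t 0 (2 * p + 1) + ∑ l ∈ Finset.range p, t (l + 1) (2 * p - 2 * l - 1) := by
  unfold aa
  have h : (2 * p + 1) / 2 + 1 = p + 1 := by omega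
  rw [h, Finset.sum_range_succ']
  have h1 : 2 * p + 1 - 2 * 0 = 2 * p + 1 := by omega
  rw [h1]
  have h2 : ∀ l ∈ Finset.range p,
      t (l + 1) (2 * p + 1 - 2 * (l + 1)) = t (l + 1) (2 * p - 2 * l - 1) := by
    intro l hl
    congr 1
    omega
  rw [Finset.sum_congr rfl h2]
  ring

lemma key_even (p : ℕ) :
    (2 * (p : ℝ) + 2) * aa (2 * p + 2)
      = (2 * (p : ℝ) + 2) * aa (2 * p) + 2 * aa (2 * p + 1) := by
  rw [aa_even, aa_even', aa_odd]
  have hterm : ∀ l ∈ Finset.range p,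
      (2 * (p : ℝ) + 2) * t (l + 1) (2 * p - 2 * l)
        = (2 * (p : ℝ) + 2) * t l (2 * p - 2 * l) + 2 * t (l + 1) (2 * p - 2 * l - 1) := by
    intro l hl
    rw [Finset.mem_range] at hl
    obtain ⟨j, hj⟩ : ∃ j, 2 * p - 2 * l - 1 = j := ⟨_, rfl⟩
    have hj1 : 2 * p - 2 * l = j + 1 := by omega
    have := t_step_s13 l j
    have hc : 2 * (l : ℝ) + (j : ℝ) + 3 = 2 * (p : ℝ) + 2 := by
      have : 2 * l + j + 3 = 2 * p + 2 := by omega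
      exact_mod_cast congrArg (Nat.cast : ℕ → ℝ) this
    rw [hj, hj1, ← hc]
    exact this
  have hsum : (2 * (p : ℝ) + 2) * (∑ l ∈ Finset.range p, t (l + 1) (2 * p - 2 * l))
      = (2 * (p : ℝ) + 2) * (∑ l ∈ Finset.range p, t l (2 * p - 2 * l))
        + 2 * ∑ l ∈ Finset.range p, t (l + 1) (2 * p - 2 * l - 1) := by
    rw [Finset.mul_sum, Finset.mul_sum, Finset.mul_sum, ← Finset.sum_add_distrib]
    exact Finset.sum_congr rfl hterm
  have hbase : (2 * (p : ℝ) + 2) * t 0 (2 * p + 2) = 2 * t 0 (2 * p + 1) := by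
    have := t_base (2 * p + 1)
    have hc : ((2 * p + 1 : ℕ) : ℝ) + 1 = 2 * (p : ℝ) + 2 := by push_cast; ring
    rw [hc] at this
    exact this
  nlinarith [hsum, hbase]

lemma key_odd (p : ℕ) :
    (2 * (p : ℝ) + 3) * aa (2 * p + 3)
      = (2 * (p : ℝ) + 3) * aa (2 * p + 1) + 2 * aa (2 * p + 2) := by
  -- expand aa (2p+3)
  have e3 : 2 * p + 3 = 2 * (p + 1) + 1 := by ring
  have hA : aa (2 * p + 3)
      = t 0 (2 * p + 3) + ∑ l ∈ Finset.range (p + 1), t (l + 1) (2 * p + 1 - 2 * l) := by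
    rw [e3, aa_odd]
    have h1 : ∀ l ∈ Finset.range (p + 1),
        t (l + 1) (2 * (p + 1) - 2 * l - 1) = t (l + 1) (2 * p + 1 - 2 * l) := by
      intro l hl; congr 1; omega
    rw [Finset.sum_congr rfl h1]
  -- aa (2p+1) as a full sum over range (p+1)
  have hB : aa (2 * p + 1) = ∑ l ∈ Finset.range (p + 1), t l (2 * p + 1 - 2 * l) := by
    unfold aa
    have h : (2 * p + 1) / 2 + 1 = p + 1 := by omega
    rw [h]
  -- termwise step identities
  have hterm : ∀ l ∈ Finset.range (p + 1),
      (2 * (p : ℝ) + 3) * t (l + 1) (2 * p + 1 - 2 * l)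
        = (2 * (p : ℝ) + 3) * t l (2 * p + 1 - 2 * l) + 2 * t (l + 1) (2 * p - 2 * l) := by
    intro l hl
    rw [Finset.mem_range] at hl
    obtain ⟨j, hj⟩ : ∃ j, 2 * p - 2 * l = j := ⟨_, rfl⟩
    have hj1 : 2 * p + 1 - 2 * l = j + 1 := by omega
    have hstep := t_step_s13 l j
    have hc : 2 * (l : ℝ) + (j : ℝ) + 3 = 2 * (p : ℝ) + 3 := by
      have h' : 2 * l + j + 3 = 2 * p + 3 := by omega
      have := congrArg (Nat.cast : ℕ → ℝ) h'
      push_cast at this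
      linarith
    rw [hj, hj1, ← hc]
    exact hstep
  have hsum : (2 * (p : ℝ) + 3) * (∑ l ∈ Finset.range (p + 1), t (l + 1) (2 * p + 1 - 2 * l))
      = (2 * (p : ℝ) + 3) * (∑ l ∈ Finset.range (p + 1), t l (2 * p + 1 - 2 * l))
        + 2 * ∑ l ∈ Finset.range (p + 1), t (l + 1) (2 * p - 2 * l) := by
    rw [Finset.mul_sum, Finset.mul_sum, Finset.mul_sum, ← Finset.sum_add_distrib]
    exact Finset.sum_congr rfl hterm
  -- the produced sum equals aa (2p+2) - t 0 (2p+2)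
  have hC : ∑ l ∈ Finset.range (p + 1), t (l + 1) (2 * p - 2 * l)
      = (∑ l ∈ Finset.range p, t (l + 1) (2 * p - 2 * l)) + 1 := by
    rw [Finset.sum_range_succ]
    have h0 : 2 * p - 2 * p = 0 := by omega
    rw [h0, t_zero]
  have hbase : (2 * (p : ℝ) + 3) * t 0 (2 * p + 3) = 2 * t 0 (2 * p + 2) := by
    have := t_base (2 * p + 2)
    have hc : ((2 * p + 2 : ℕ) : ℝ) + 1 = 2 * (p : ℝ) + 3 := by push_cast; ring
    rw [hc] at this
    exact this
  rw [hA, hB, aa_even]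
  rw [hC] at hsum
  nlinarith [hsum, hbase]

lemma aa_main (p : ℕ) : aa (2 * p) = 2 * (p : ℝ) + 1 ∧ aa (2 * p + 1) = 2 * (p : ℝ) + 2 := by
  induction p with
  | zero => simpa using ⟨aa_zero, aa_one⟩
  | succ p ih =>
    have hne : (2 * (p : ℝ) + 2) ≠ 0 := by positivity
    have hne' : (2 * (p : ℝ) + 3) ≠ 0 := by positivity
    have h2 : aa (2 * p + 2) = 2 * (p : ℝ) + 3 := by
      refine mul_left_cancel₀ hne ?_
      rw [key_even p, ih.1, ih.2]; ring
    have h3 : aa (2 * p + 3) = 2 * (p : ℝ) + 4 := by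
      refine mul_left_cancel₀ hne' ?_
      rw [key_odd p, ih.2, h2]; ring
    constructor
    · have e : 2 * (p + 1) = 2 * p + 2 := by ring
      rw [e, h2]; push_cast; ring
    · have e : 2 * (p + 1) + 1 = 2 * p + 3 := by ring
      rw [e, h3]; push_cast; ring

lemma aa_eq (N : ℕ) : aa N = (N : ℝ) + 1 := by
  rcases Nat.even_or_odd N with ⟨p, hp⟩ | ⟨p, hp⟩
  · have e : N = 2 * p := by omega
    subst e
    rw [(aa_main p).1]; push_cast; ring
  · have e : N = 2 * p + 1 := by omega
    subst e
    rw [(aa_main p).2]; push_cast; ring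

/-- **Theorem 4** of the paper (the sum rule): for `m ≥ 1`,
`∑_{l=0}^{⌊(m-1)/2⌋} t_l(m − 2l − 1) = m`. -/
theorem t_sum_rule (m : ℕ) (hm : 1 ≤ m) :
    ∑ l ∈ Finset.range ((m - 1) / 2 + 1), t l (m - 2 * l - 1) = (m : ℝ) := by
  obtain ⟨N, rfl⟩ : ∃ N, m = N + 1 := ⟨m - 1, by omega⟩
  have h : ∑ l ∈ Finset.range ((N + 1 - 1) / 2 + 1), t l (N + 1 - 2 * l - 1) = aa N := by
    unfold aa
    have h1 : (N + 1 - 1) / 2 + 1 = N / 2 + 1 := by omega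
    rw [h1]
    refine Finset.sum_congr rfl fun l hl => ?_
    congr 1
    omega
  rw [h, aa_eq]
  push_cast
  ring
end

section
/- For all natural numbers n ≥ 1 and l ≥ 0, setting m := n + 2l, the coefficient t_l(n-1) admits the closed form t_l(n-1) = (m / (2·(n-1)!)) · ∑_{j=0}^{m-n} ((j+n-1)!/j!) · L_m^j · s(m-1, j+n-1), where s(m-1, k) denotes the (signed) Stirling number of the first kind, i.e. the coefficient of X^k in the descending factorial polynomial X(X−1)⋯(X−(m−2)) (with the empty product equal to 1 when m = 1), and L_m^j := ∑_{i=0}^{m} (i−1)^j / (i! · (m−i)!) with the convention that (i−1)^j = 1 when i = 1 and j = 0. -/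
/-- The descending factorial polynomial `X(X−1)⋯(X−(n−1))` (with the empty
product equal to `1` when `n = 0`). -/
noncomputable def descFactorialPoly (n : ℕ) : Polynomial ℝ :=
  ∏ i ∈ Finset.range n, (Polynomial.X - Polynomial.C (i : ℝ))

/-- The signed Stirling number of the first kind `s(n, k)`: the coefficient of
`X^k` in the descending factorial polynomial `X(X−1)⋯(X−(n−1))`. -/
noncomputable def stirlingFirst (n k : ℕ) : ℝ := (descFactorialPoly n).coeff k

/-- Equation (33) of the paper: `L_m^j = ∑_{i=0}^{m} (i−1)^j / (i!·(m−i)!)`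
(with the convention `(i−1)^j = 1` when `i = 1` and `j = 0`, which holds since
`(0 : ℝ)^(0 : ℕ) = 1`). -/
noncomputable def L (m j : ℕ) : ℝ :=
  ∑ i ∈ Finset.range (m + 1),
    ((i : ℝ) - 1) ^ j / ((Nat.factorial i : ℝ) * (Nat.factorial (m - i) : ℝ))

open Polynomial Finset

namespace TC

noncomputable def D (r d : ℕ) : Polynomial ℝ := derivative^[d] (descFactorialPoly r)

noncomputable def V (n m : ℕ) : ℝ :=
  ∑ i ∈ range (m + 1), (m.choose i : ℝ) * (D (m - 1) (n - 1)).eval ((i : ℝ) - 1)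

noncomputable def G (n m : ℕ) : ℝ :=
  (m : ℝ) / (2 * (Nat.factorial (n - 1) : ℝ) * (Nat.factorial m : ℝ)) * V n m

lemma dfp_succ_left (r : ℕ) :
    descFactorialPoly (r + 1) = descFactorialPoly r * (X - C (r : ℝ)) := by
  rw [descFactorialPoly, descFactorialPoly, prod_range_succ]

lemma dfp_succ_right (r : ℕ) :
    descFactorialPoly (r + 1) = X * (descFactorialPoly r).comp (X - C 1) := by
  rw [descFactorialPoly, descFactorialPoly, Polynomial.prod_comp, prod_range_succ']
  rw [show (X : Polynomial ℝ) - C ((0 : ℕ) : ℝ) = X by simp, mul_comm]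
  congr 1
  refine prod_congr rfl fun i _ => ?_
  simp only [sub_comp, X_comp, C_comp]
  rw [sub_sub, ← C_add, add_comm (1:ℝ)]
  push_cast
  ring

lemma natDegree_dfp_le (r : ℕ) : (descFactorialPoly r).natDegree ≤ r := by
  have h1 := Polynomial.natDegree_prod_le (range r) (fun i => X - C (i : ℝ))
  have h2 : ∑ i ∈ range r, (X - C (i : ℝ)).natDegree ≤ ∑ _i ∈ range r, 1 :=
    sum_le_sum fun i _ => (natDegree_X_sub_C (i:ℝ)).le
  rw [descFactorialPoly]
  simpa using le_trans (le_trans h1 h2) (by simp)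

lemma iter_deriv_linear_mul (c : ℝ) (p : Polynomial ℝ) (k : ℕ) :
    derivative^[k + 1] ((X - C c) * p)
      = (X - C c) * derivative^[k + 1] p + C ((k : ℝ) + 1) * derivative^[k] p := by
  induction k with
  | zero =>
    simp [derivative_mul]
    ring
  | succ k ih =>
    rw [Function.iterate_succ_apply', ih]
    rw [derivative_add, derivative_mul, derivative_mul, derivative_C, derivative_X_sub_C]
    rw [← Function.iterate_succ_apply' derivative (k+1) p,
        ← Function.iterate_succ_apply' derivative k p]
    simp only [Nat.cast_add, Nat.cast_one, C_add, C_1, zero_mul, zero_add]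
    ring

lemma iter_deriv_comp (k : ℕ) (p : Polynomial ℝ) :
    derivative^[k] (p.comp (X - C 1)) = (derivative^[k] p).comp (X - C 1) := by
  induction k generalizing p with
  | zero => simp
  | succ k ih =>
    rw [Function.iterate_succ_apply, Function.iterate_succ_apply, derivative_comp,
      derivative_X_sub_C, one_mul, ih]

lemma eval_comp_sub_one (p : Polynomial ℝ) (x : ℝ) :
    (p.comp (X - C 1)).eval x = p.eval (x - 1) := by simp

-- P1 evaluated
lemma E1 (M n : ℕ) (x : ℝ) :
    (D (M + 1) (n + 1)).eval x
      = x * (D M (n + 1)).eval (x - 1) + ((n : ℝ) + 1) * (D M n).eval (x - 1) := by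
  have hp : D (M + 1) (n + 1)
      = X * (D M (n + 1)).comp (X - C 1) + C ((n : ℝ) + 1) * (D M n).comp (X - C 1) := by
    rw [D, dfp_succ_right]
    nth_rewrite 1 [show (X : Polynomial ℝ) = X - C 0 from by simp]
    rw [iter_deriv_linear_mul, iter_deriv_comp, iter_deriv_comp]
    simp [D]
  rw [hp]
  simp [eval_comp_sub_one]

-- P2 evaluated
lemma E2 (M n : ℕ) (x : ℝ) :
    (D (M + 1) (n + 1)).eval x
      = (x - (M : ℝ)) * (D M (n + 1)).eval x + ((n : ℝ) + 1) * (D M n).eval x := by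
  have hp : D (M + 1) (n + 1)
      = (X - C (M : ℝ)) * D M (n + 1) + C ((n : ℝ) + 1) * D M n := by
    rw [D, dfp_succ_left, mul_comm, iter_deriv_linear_mul]
    rfl
  rw [hp]
  simp

-- E3 evaluated difference identity
lemma E3 (M k : ℕ) (x : ℝ) :
    (D M k).eval x - (D M k).eval (x - 1) = (M : ℝ) * (D (M - 1) k).eval (x - 1) := by
  have hp : D M k - (D M k).comp (X - C 1) = C (M : ℝ) * (D (M - 1) k).comp (X - C 1) := by
    cases M with
    | zero =>
      have h0 : descFactorialPoly 0 = 1 := by simp [descFactorialPoly]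
      cases k with
      | zero => simp [D, h0]
      | succ k =>
        have : D 0 (k + 1) = 0 := by
          apply Polynomial.iterate_derivative_eq_zero
          rw [h0]
          simp
        simp [this, Nat.zero_sub, D]
        rw [h0]
        simp
    | succ M =>
      have h1 : descFactorialPoly (M + 1) - (descFactorialPoly (M + 1)).comp (X - C 1)
          = C ((M : ℝ) + 1) * (descFactorialPoly M).comp (X - C 1) := by
        nth_rewrite 2 [dfp_succ_left]
        rw [dfp_succ_right]
        rw [mul_comp, sub_comp, X_comp, C_comp]
        rw [show C ((M:ℝ)+1) = C 1 + C (M:ℝ) from by rw [← C_add, add_comm]]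
        ring
      have : D (M + 1) k - (D (M + 1) k).comp (X - C 1)
          = derivative^[k] (descFactorialPoly (M + 1)
              - (descFactorialPoly (M + 1)).comp (X - C 1)) := by
        rw [Polynomial.iterate_derivative_sub, iter_deriv_comp]
        rfl
      rw [this, h1, Polynomial.iterate_derivative_C_mul, iter_deriv_comp]
      push_cast
      rfl
  have := congrArg (fun q => Polynomial.eval x q) hp
  simpa [eval_comp_sub_one] using this

end TC

namespace TC

lemma choose_sub_mul (n k : ℕ) :
    (n + 1 - k) * (n + 1).choose k = (n + 1) * n.choose k := by
  rcases le_or_gt k n with h | h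
  · have e1 : (n + 1).choose k = (n + 1).choose (n + 1 - k) := (Nat.choose_symm (by omega)).symm
    have h2 : n + 1 - k = (n - k) + 1 := by omega
    rw [e1, h2]
    calc (n - k + 1) * (n + 1).choose (n - k + 1)
        = (n + 1).choose (n - k + 1) * (n - k + 1) := mul_comm _ _
      _ = (n + 1) * n.choose (n - k) := by
          simpa [Nat.succ_eq_add_one] using (Nat.add_one_mul_choose_eq n (n - k)).symm
      _ = (n + 1) * n.choose k := by rw [Nat.choose_symm h]
  · have h3 : n.choose k = 0 := Nat.choose_eq_zero_of_lt h
    rcases Nat.lt_or_ge k (n + 2) with h2 | h2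
    · have : n + 1 - k = 0 := by omega
      rw [this, h3]; ring
    · rw [Nat.choose_eq_zero_of_lt (by omega), h3]; ring

lemma split_pascal (M : ℕ) (W : ℕ → ℝ) :
    ∑ i ∈ range (M + 3), ((M + 2).choose i : ℝ) * W i
      = ∑ i ∈ range (M + 2), ((M + 1).choose i : ℝ) * (W (i + 1) + W i) := by
  rw [Finset.sum_range_succ' (fun i => ((M + 2).choose i : ℝ) * W i) (M + 2)]
  have e1 : ∑ i ∈ range (M + 2), ((M + 2).choose (i + 1) : ℝ) * W (i + 1)
      = ∑ i ∈ range (M + 2),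
          (((M + 1).choose i : ℝ) * W (i + 1) + ((M + 1).choose (i + 1) : ℝ) * W (i + 1)) := by
    refine sum_congr rfl fun i _ => ?_
    rw [Nat.choose_succ_succ (M + 1) i]
    push_cast
    ring
  rw [e1, Finset.sum_add_distrib]
  have e2 : ∑ i ∈ range (M + 2), ((M + 1).choose (i + 1) : ℝ) * W (i + 1)
        + ((M + 2).choose 0 : ℝ) * W 0
      = ∑ i ∈ range (M + 2), ((M + 1).choose i : ℝ) * W i := by
    rw [Finset.sum_range_succ' (fun i => ((M + 1).choose i : ℝ) * W i) (M + 1)]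
    rw [Finset.sum_range_succ (fun i => ((M + 1).choose (i + 1) : ℝ) * W (i + 1)) (M + 1)]
    simp [Nat.choose_succ_self]
  rw [add_assoc, e2, ← Finset.sum_add_distrib]
  refine sum_congr rfl fun i _ => ?_
  ring

lemma key (N M : ℕ) :
    V (N + 2) (M + 2)
      = ((M : ℝ) + 1) * (M : ℝ) * V (N + 2) M + 2 * ((N : ℝ) + 1) * V (N + 1) (M + 1) := by
  have hQR : ∀ x : ℝ,
      (D (M + 1) (N + 1)).eval x + (D (M + 1) (N + 1)).eval (x - 1)
        = (2 * x - ((M : ℝ) + 1)) * (D M (N + 1)).eval (x - 1)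
          + 2 * ((N : ℝ) + 1) * (D M N).eval (x - 1) := by
    intro x
    have e2 := E2 M N (x - 1)
    rw [E1 M N x, e2]
    ring
  have h1 : V (N + 2) (M + 2)
      = ∑ i ∈ range (M + 2),
          ((M + 1).choose i : ℝ) * ((D (M + 1) (N + 1)).eval ((i : ℝ))
            + (D (M + 1) (N + 1)).eval ((i : ℝ) - 1)) := by
    have e0 : V (N + 2) (M + 2)
        = ∑ i ∈ range (M + 3), ((M + 2).choose i : ℝ)
            * (D (M + 1) (N + 1)).eval ((i : ℝ) - 1) := rfl
    rw [e0, split_pascal M (fun i => (D (M + 1) (N + 1)).eval ((i : ℝ) - 1))]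
    refine sum_congr rfl fun i _ => ?_
    push_cast
    ring_nf
  have h2 : V (N + 2) (M + 2)
      = ∑ i ∈ range (M + 2),
          ((M + 1).choose i : ℝ) * ((2 * (i : ℝ) - ((M : ℝ) + 1)) * (D M (N + 1)).eval ((i : ℝ) - 1))
        + 2 * ((N : ℝ) + 1) * V (N + 1) (M + 1) := by
    rw [h1]
    have e : ∀ i ∈ range (M + 2),
        ((M + 1).choose i : ℝ) * ((D (M + 1) (N + 1)).eval ((i : ℝ))
            + (D (M + 1) (N + 1)).eval ((i : ℝ) - 1))
          = ((M + 1).choose i : ℝ)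
              * ((2 * (i : ℝ) - ((M : ℝ) + 1)) * (D M (N + 1)).eval ((i : ℝ) - 1))
            + 2 * ((N : ℝ) + 1) * (((M + 1).choose i : ℝ) * (D M N).eval ((i : ℝ) - 1)) := by
      intro i _
      rw [hQR (i : ℝ)]
      ring
    rw [Finset.sum_congr rfl e, Finset.sum_add_distrib, ← Finset.mul_sum]
    rfl
  have hS1 : ∑ i ∈ range (M + 2),
        ((M + 1).choose i : ℝ) * ((i : ℝ) * (D M (N + 1)).eval ((i : ℝ) - 1))
      = ((M : ℝ) + 1) * ∑ i ∈ range (M + 1), (M.choose i : ℝ) * (D M (N + 1)).eval (i : ℝ) := by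
    rw [Finset.sum_range_succ'
      (fun i => ((M + 1).choose i : ℝ) * ((i : ℝ) * (D M (N + 1)).eval ((i : ℝ) - 1))) (M + 1)]
    have e : ∀ i ∈ range (M + 1),
        ((M + 1).choose (i + 1) : ℝ) * (((i + 1 : ℕ) : ℝ) * (D M (N + 1)).eval (((i + 1 : ℕ) : ℝ) - 1))
          = ((M : ℝ) + 1) * ((M.choose i : ℝ) * (D M (N + 1)).eval (i : ℝ)) := by
      intro i _
      have hn : (M + 1) * M.choose i = (M + 1).choose (i + 1) * (i + 1) :=
        Nat.add_one_mul_choose_eq M i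
      have hn' : ((M : ℝ) + 1) * (M.choose i : ℝ)
          = ((M + 1).choose (i + 1) : ℝ) * ((i : ℝ) + 1) := by exact_mod_cast hn
      push_cast
      rw [add_sub_cancel_right]
      linear_combination (-(D M (N + 1)).eval (i : ℝ)) * hn'
    rw [Finset.sum_congr rfl e, ← Finset.mul_sum]
    simp
  have hS2 : ∑ i ∈ range (M + 2),
        ((M + 1).choose i : ℝ) * ((((M : ℝ) + 1) - (i : ℝ)) * (D M (N + 1)).eval ((i : ℝ) - 1))
      = ((M : ℝ) + 1) * ∑ i ∈ range (M + 1), (M.choose i : ℝ) * (D M (N + 1)).eval ((i : ℝ) - 1) := by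
    have e : ∀ i ∈ range (M + 2),
        ((M + 1).choose i : ℝ) * ((((M : ℝ) + 1) - (i : ℝ)) * (D M (N + 1)).eval ((i : ℝ) - 1))
          = ((M : ℝ) + 1) * ((M.choose i : ℝ) * (D M (N + 1)).eval ((i : ℝ) - 1)) := by
      intro i hi
      have hi' : i < M + 2 := mem_range.mp hi
      have hn := choose_sub_mul M i
      have hc : ((M + 1 - i : ℕ) : ℝ) = ((M : ℝ) + 1) - (i : ℝ) := by
        rw [Nat.cast_sub (by omega : i ≤ M + 1)]
        push_cast
        ring
      have hn' : (((M : ℝ) + 1) - (i : ℝ)) * ((M + 1).choose i : ℝ)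
          = ((M : ℝ) + 1) * (M.choose i : ℝ) := by
        rw [← hc]
        exact_mod_cast hn
      linear_combination (D M (N + 1)).eval ((i : ℝ) - 1) * hn'
    rw [Finset.sum_congr rfl e, ← Finset.mul_sum,
      Finset.sum_range_succ (fun i => (M.choose i : ℝ) * (D M (N + 1)).eval ((i : ℝ) - 1)) (M + 1)]
    simp [Nat.choose_succ_self]
  have h3 : ∑ i ∈ range (M + 2),
        ((M + 1).choose i : ℝ) * ((2 * (i : ℝ) - ((M : ℝ) + 1)) * (D M (N + 1)).eval ((i : ℝ) - 1))
      = ((M : ℝ) + 1) * ∑ i ∈ range (M + 1),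
          (M.choose i : ℝ) * ((D M (N + 1)).eval (i : ℝ) - (D M (N + 1)).eval ((i : ℝ) - 1)) := by
    have e : ∀ i ∈ range (M + 2),
        ((M + 1).choose i : ℝ) * ((2 * (i : ℝ) - ((M : ℝ) + 1)) * (D M (N + 1)).eval ((i : ℝ) - 1))
          = ((M + 1).choose i : ℝ) * ((i : ℝ) * (D M (N + 1)).eval ((i : ℝ) - 1))
            - ((M + 1).choose i : ℝ) * ((((M : ℝ) + 1) - (i : ℝ)) * (D M (N + 1)).eval ((i : ℝ) - 1)) := by
      intro i _
      ring
    rw [Finset.sum_congr rfl e, Finset.sum_sub_distrib, hS1, hS2, ← mul_sub,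
      ← Finset.sum_sub_distrib]
    congr 1
    exact sum_congr rfl fun i _ => by ring
  have h4 : ∑ i ∈ range (M + 1),
        (M.choose i : ℝ) * ((D M (N + 1)).eval (i : ℝ) - (D M (N + 1)).eval ((i : ℝ) - 1))
      = (M : ℝ) * V (N + 2) M := by
    have e : ∀ i ∈ range (M + 1),
        (M.choose i : ℝ) * ((D M (N + 1)).eval (i : ℝ) - (D M (N + 1)).eval ((i : ℝ) - 1))
          = (M : ℝ) * ((M.choose i : ℝ) * (D (M - 1) (N + 1)).eval ((i : ℝ) - 1)) := by
      intro i _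
      rw [E3 M (N + 1) (i : ℝ)]
      ring
    rw [Finset.sum_congr rfl e, ← Finset.mul_sum]
    rfl
  rw [h2, h3, h4]
  ring

end TC

namespace TC

lemma G_step (N M : ℕ) :
    G (N + 2) (M + 2) = G (N + 2) M + 2 / ((M : ℝ) + 1) * G (N + 1) (M + 1) := by
  have hkey := key N M
  simp only [G, show N + 2 - 1 = N + 1 from rfl, show N + 1 - 1 = N from rfl]
  rw [hkey]
  have hM2 : (Nat.factorial (M + 2) : ℝ)
      = ((M : ℝ) + 2) * ((M : ℝ) + 1) * (Nat.factorial M : ℝ) := by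
    rw [Nat.factorial_succ, Nat.factorial_succ]; push_cast; ring
  have hM1 : (Nat.factorial (M + 1) : ℝ) = ((M : ℝ) + 1) * (Nat.factorial M : ℝ) := by
    rw [Nat.factorial_succ]; push_cast; ring
  have hN1 : (Nat.factorial (N + 1) : ℝ) = ((N : ℝ) + 1) * (Nat.factorial N : ℝ) := by
    rw [Nat.factorial_succ]; push_cast; ring
  have f1 : (Nat.factorial M : ℝ) ≠ 0 := Nat.cast_ne_zero.mpr (Nat.factorial_ne_zero M)
  have f2 : (Nat.factorial N : ℝ) ≠ 0 := Nat.cast_ne_zero.mpr (Nat.factorial_ne_zero N)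
  have f3 : (M : ℝ) + 1 ≠ 0 := by positivity
  have f4 : (M : ℝ) + 2 ≠ 0 := by positivity
  have f5 : (N : ℝ) + 1 ≠ 0 := by positivity
  rw [hM2, hM1, hN1]
  push_cast
  field_simp

lemma G_zero (N : ℕ) : G (N + 2) N = 0 := by
  have hD : D (N - 1) (N + 1) = 0 := by
    apply Polynomial.iterate_derivative_eq_zero
    exact lt_of_le_of_lt (natDegree_dfp_le (N - 1)) (by omega)
  have hV : V (N + 2) N = 0 := by
    simp only [V, show N + 2 - 1 = N + 1 from rfl]
    rw [hD]
    simp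
  rw [G, hV, mul_zero]

lemma eval_dfp_neg_one (r : ℕ) :
    (descFactorialPoly r).eval (-1) = (-1) ^ r * (Nat.factorial r : ℝ) := by
  induction r with
  | zero => simp [descFactorialPoly]
  | succ r ih =>
    rw [dfp_succ_left, eval_mul, ih]
    simp only [eval_sub, eval_X, eval_C]
    rw [Nat.factorial_succ]
    push_cast
    ring

lemma eval_dfp_middle (r k : ℕ) (h : k < r) : (descFactorialPoly r).eval (k : ℝ) = 0 := by
  rw [descFactorialPoly, eval_prod]
  exact prod_eq_zero (mem_range.2 h) (by simp)

lemma eval_dfp_top (r : ℕ) : (descFactorialPoly r).eval (r : ℝ) = (Nat.factorial r : ℝ) := by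
  induction r with
  | zero => simp [descFactorialPoly]
  | succ r ih =>
    rw [dfp_succ_right, eval_mul, eval_comp]
    simp only [eval_sub, eval_X, eval_C]
    push_cast
    rw [show ((r : ℝ) + 1) - 1 = (r : ℝ) from by ring, ih, Nat.factorial_succ]
    push_cast
    ring

lemma V_one (l : ℕ) : V 1 (2 * l + 1) = 2 * (Nat.factorial (2 * l) : ℝ) := by
  have e0 : V 1 (2 * l + 1)
      = ∑ i ∈ range (2 * l + 2), ((2 * l + 1).choose i : ℝ)
          * (descFactorialPoly (2 * l)).eval ((i : ℝ) - 1) := rfl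
  rw [e0, Finset.sum_range_succ, Finset.sum_range_succ'
    (fun i => ((2 * l + 1).choose i : ℝ) * (descFactorialPoly (2 * l)).eval ((i : ℝ) - 1)) (2 * l)]
  have hmid : ∀ i ∈ range (2 * l),
      ((2 * l + 1).choose (i + 1) : ℝ)
          * (descFactorialPoly (2 * l)).eval (((i + 1 : ℕ) : ℝ) - 1) = 0 := by
    intro i hi
    rw [show (((i + 1 : ℕ) : ℝ)) - 1 = (i : ℝ) from by push_cast; ring,
      eval_dfp_middle (2 * l) i (mem_range.mp hi), mul_zero]
  rw [Finset.sum_congr rfl hmid]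
  rw [show (((0 : ℕ) : ℝ)) - 1 = -1 from by norm_num,
    show (((2 * l + 1 : ℕ) : ℝ)) - 1 = ((2 * l : ℕ) : ℝ) from by push_cast; ring,
    eval_dfp_neg_one, eval_dfp_top]
  simp [pow_mul]
  ring

lemma t_eq_G (N l : ℕ) : t l N = G (N + 1) (N + 1 + 2 * l) := by
  induction N generalizing l with
  | zero =>
    show (1 : ℝ) = G 1 (1 + 2 * l)
    rw [show 1 + 2 * l = 2 * l + 1 from by omega, G]
    simp only [Nat.sub_self, Nat.factorial_zero]
    rw [V_one]
    have f1 : (Nat.factorial (2 * l) : ℝ) ≠ 0 := Nat.cast_ne_zero.mpr (Nat.factorial_ne_zero _)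
    have f2 : ((2 * l + 1 : ℕ) : ℝ) ≠ 0 := Nat.cast_ne_zero.mpr (by omega)
    have hfac : (Nat.factorial (2 * l + 1) : ℝ)
        = ((2 * l + 1 : ℕ) : ℝ) * (Nat.factorial (2 * l) : ℝ) := by
      rw [Nat.factorial_succ]
      push_cast
      ring
    rw [hfac]
    field_simp
    ring
  | succ N ih =>
    have hsum : ∀ l', ∑ m ∈ range (l' + 1),
        G (N + 1) (N + 1 + 2 * m) / ((m : ℝ) + ((N : ℝ) + 1) / 2)
          = G (N + 2) (N + 2 + 2 * l') := by
      intro l'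
      induction l' with
      | zero =>
        rw [Finset.sum_range_one]
        have hstep := G_step N N
        have hz := G_zero N
        norm_num
        rw [hstep, hz]
        have f5 : (N : ℝ) + 1 ≠ 0 := by positivity
        field_simp
        ring
      | succ l' ihl =>
        rw [Finset.sum_range_succ, ihl]
        have hstep := G_step N (N + 2 + 2 * l')
        rw [show N + 2 + 2 * l' + 2 = N + 2 + 2 * (l' + 1) from by omega,
          show N + 2 + 2 * l' + 1 = N + 1 + 2 * (l' + 1) from by omega] at hstep
        rw [hstep]
        have f6 : ((N + 2 + 2 * l' : ℕ) : ℝ) + 1 ≠ 0 := by positivity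
        congr 1
        have d1 : (l' : ℝ) + 1 + ((N : ℝ) + 1) / 2 ≠ 0 := by positivity
        have d2 : ((N + 2 + 2 * l' : ℕ) : ℝ) + 1 ≠ 0 := by positivity
        push_cast
        push_cast at d1 d2
        field_simp
        ring
    have hdef : t l (N + 1) = ∑ m ∈ range (l + 1), t m N / ((m : ℝ) + ((N : ℝ) + 1) / 2) := rfl
    rw [hdef, Finset.sum_congr rfl fun m _ => by rw [ih m]]
    exact hsum l

end TC

namespace TC

lemma desc_cast (j N : ℕ) :
    (((j + N).descFactorial N : ℕ) : ℝ)
      = (Nat.factorial (j + N) : ℝ) / (Nat.factorial j : ℝ) := by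
  have h := Nat.factorial_mul_descFactorial (Nat.le_add_left N j)
  rw [show j + N - N = j from by omega] at h
  have h2 : (j + N).descFactorial N * Nat.factorial j = Nat.factorial (j + N) := by
    rw [mul_comm]; exact h
  have fj : (Nat.factorial j : ℝ) ≠ 0 := Nat.cast_ne_zero.mpr (Nat.factorial_ne_zero j)
  field_simp
  exact_mod_cast h2

lemma sum_eq (N l : ℕ) :
    ∑ j ∈ range (2 * l + 1), ((Nat.factorial (j + N) : ℝ) / (Nat.factorial j : ℝ))
        * L (N + 1 + 2 * l) j * stirlingFirst (N + 2 * l) (j + N)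
      = V (N + 1) (N + 1 + 2 * l) / (Nat.factorial (N + 1 + 2 * l) : ℝ) := by
  have hdeg : (D (N + 2 * l) N).natDegree < 2 * l + 1 := by
    have h1 := Polynomial.natDegree_iterate_derivative (descFactorialPoly (N + 2 * l)) N
    have h2 := natDegree_dfp_le (N + 2 * l)
    have h3 : (D (N + 2 * l) N).natDegree
        ≤ (descFactorialPoly (N + 2 * l)).natDegree - N := h1
    omega
  have heval : ∀ x : ℝ, (D (N + 2 * l) N).eval x
      = ∑ j ∈ range (2 * l + 1), ((Nat.factorial (j + N) : ℝ) / (Nat.factorial j : ℝ))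
          * stirlingFirst (N + 2 * l) (j + N) * x ^ j := by
    intro x
    rw [Polynomial.eval_eq_sum_range' hdeg]
    refine sum_congr rfl fun j _ => ?_
    rw [show (D (N + 2 * l) N).coeff j
        = ((j + N).descFactorial N) • (descFactorialPoly (N + 2 * l)).coeff (j + N) from
      Polynomial.coeff_iterate_derivative _ _]
    rw [nsmul_eq_mul, desc_cast]
    rfl
  have h1 : ∑ j ∈ range (2 * l + 1), ((Nat.factorial (j + N) : ℝ) / (Nat.factorial j : ℝ))
        * L (N + 1 + 2 * l) j * stirlingFirst (N + 2 * l) (j + N)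
      = ∑ j ∈ range (2 * l + 1), ∑ i ∈ range ((N + 1 + 2 * l) + 1),
          ((Nat.factorial (j + N) : ℝ) / (Nat.factorial j : ℝ))
            * stirlingFirst (N + 2 * l) (j + N)
            * ((((i : ℝ) - 1) ^ j) / ((Nat.factorial i : ℝ)
                * (Nat.factorial ((N + 1 + 2 * l) - i) : ℝ))) := by
    refine sum_congr rfl fun j _ => ?_
    rw [L, Finset.mul_sum, Finset.sum_mul]
    refine sum_congr rfl fun i _ => ?_
    ring
  rw [h1, Finset.sum_comm]
  have h2 : ∀ i ∈ range ((N + 1 + 2 * l) + 1),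
      ∑ j ∈ range (2 * l + 1),
          ((Nat.factorial (j + N) : ℝ) / (Nat.factorial j : ℝ))
            * stirlingFirst (N + 2 * l) (j + N)
            * ((((i : ℝ) - 1) ^ j) / ((Nat.factorial i : ℝ)
                * (Nat.factorial ((N + 1 + 2 * l) - i) : ℝ)))
        = (D (N + 2 * l) N).eval ((i : ℝ) - 1)
            / ((Nat.factorial i : ℝ) * (Nat.factorial ((N + 1 + 2 * l) - i) : ℝ)) := by
    intro i _
    rw [heval ((i : ℝ) - 1), Finset.sum_div]
    refine sum_congr rfl fun j _ => ?_
    ring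
  rw [Finset.sum_congr rfl h2]
  have hV : V (N + 1) (N + 1 + 2 * l)
      = ∑ i ∈ range ((N + 1 + 2 * l) + 1),
          ((N + 1 + 2 * l).choose i : ℝ) * (D (N + 2 * l) N).eval ((i : ℝ) - 1) := by
    rw [V, show N + 1 + 2 * l - 1 = N + 2 * l from by omega,
      show N + 1 - 1 = N from rfl]
  rw [hV, Finset.sum_div]
  refine sum_congr rfl fun i hi => ?_
  have hi' : i ≤ N + 1 + 2 * l := by
    have := mem_range.mp hi; omega
  have hc : ((N + 1 + 2 * l).choose i : ℝ) * (Nat.factorial i : ℝ)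
      * (Nat.factorial ((N + 1 + 2 * l) - i) : ℝ) = (Nat.factorial (N + 1 + 2 * l) : ℝ) := by
    exact_mod_cast Nat.choose_mul_factorial_mul_factorial hi'
  have f1 : (Nat.factorial i : ℝ) ≠ 0 := Nat.cast_ne_zero.mpr (Nat.factorial_ne_zero _)
  have f2 : (Nat.factorial ((N + 1 + 2 * l) - i) : ℝ) ≠ 0 :=
    Nat.cast_ne_zero.mpr (Nat.factorial_ne_zero _)
  have f3 : (Nat.factorial (N + 1 + 2 * l) : ℝ) ≠ 0 :=
    Nat.cast_ne_zero.mpr (Nat.factorial_ne_zero _)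
  field_simp
  linear_combination (-(D (N + 2 * l) N).eval ((i : ℝ) - 1)) * hc

end TC


/-- **Theorem 6** (with **Theorem 5**, equations (31)–(32)) of the paper: for
`n ≥ 1`, `l ≥ 0` and `m := n + 2l`,
`t_l(n-1) = (m / (2·(n-1)!)) · ∑_{j=0}^{m-n} ((j+n-1)!/j!) · L_m^j · s(m-1, j+n-1)`. -/
theorem t_closed_form (n : ℕ) (hn : 1 ≤ n) (l : ℕ) :
    t l (n - 1) =
      (((n + 2 * l : ℕ) : ℝ) / (2 * (Nat.factorial (n - 1) : ℝ))) *
        ∑ j ∈ Finset.range ((n + 2 * l) - n + 1),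
          ((Nat.factorial (j + n - 1) : ℝ) / (Nat.factorial j : ℝ)) *
            L (n + 2 * l) j * stirlingFirst ((n + 2 * l) - 1) (j + n - 1) := by
  obtain ⟨N, rfl⟩ : ∃ N, n = N + 1 := ⟨n - 1, by omega⟩
  have e4 : ∀ j : ℕ, j + (N + 1) - 1 = j + N := fun j => by omega
  simp only [show N + 1 - 1 = N from rfl, e4,
    show (N + 1 + 2 * l) - (N + 1) + 1 = 2 * l + 1 from by omega,
    show (N + 1 + 2 * l) - 1 = N + 2 * l from by omega]
  rw [TC.sum_eq N l, TC.t_eq_G N l, TC.G, show N + 1 - 1 = N from rfl]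
  ring
end
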